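/- arXiv:1904.01267 — 4 statements merged into one kernel-verified Lean document; each statement's English description precedes it below -/
import Mathlib

section
/- Let c be a two-dimensional configuration over a finite alphabet of integers that is annihilated by some non-trivial Laurent polynomial. Then the orbit closure of c contains a configuration c' such that the orbit closure of c' has no one-sided direction of determinism, i.e., for every nonzero u ∈ ℤ², the orbit closure of c' is deterministic in direction u if and only if it is deterministic in direction −u. -/
/-- Translation of a configuration by `t`: `(Translate t c) n = c (n - t)`. -/
def Translate {A : Type*} (t : ℤ × ℤ) (c : ℤ × ℤ → A) : ℤ × ℤ → A :=
  fun n => c (n - t)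

/-- The orbit of a configuration: the set of all its translates. -/
def orbit {A : Type*} (c : ℤ × ℤ → A) : Set (ℤ × ℤ → A) :=
  { d | ∃ t : ℤ × ℤ, d = Translate t c }

/-- The orbit closure: the topological closure of the orbit (in the product
topology of the discrete topology on the alphabet). -/
def orbitClosure {A : Type*} [TopologicalSpace A] (c : ℤ × ℤ → A) : Set (ℤ × ℤ → A) :=
  closure (orbit c)

/-- The standard inner product on `ℤ²`. -/
def inner2 (x u : ℤ × ℤ) : ℤ := x.1 * u.1 + x.2 * u.2

/-- The discrete half plane in direction `u`. -/
def halfPlane (u : ℤ × ℤ) : Set (ℤ × ℤ) := { x | inner2 x u < 0 }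

/-- A set of configurations is deterministic in direction `u`: the contents of a
configuration on the half plane `H_u` determine the whole configuration. -/
def DeterministicIn {A : Type*} (X : Set (ℤ × ℤ → A)) (u : ℤ × ℤ) : Prop :=
  ∀ d ∈ X, ∀ e ∈ X, Set.EqOn d e (halfPlane u) → d = e

/-- The set of `D`-patterns appearing in `c` : restrictions of translates of `c` to `D`. -/
def patterns {A : Type*} (c : ℤ × ℤ → A) (D : Set (ℤ × ℤ)) : Set (D → A) :=
  { p | ∃ t : ℤ × ℤ, ∀ x : D, p x = Translate t c x }

/-- A configuration is periodic if it is fixed by some non-trivial translation. -/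
def Periodic {A : Type*} (c : ℤ × ℤ → A) : Prop :=
  ∃ t : ℤ × ℤ, t ≠ 0 ∧ Translate t c = c

/-- The discrete rectangle `{1,…,n} × {1,…,m}`. -/
def rect (n m : ℕ) : Set (ℤ × ℤ) :=
  { x | 1 ≤ x.1 ∧ x.1 ≤ (n : ℤ) ∧ 1 ≤ x.2 ∧ x.2 ≤ (m : ℤ) }

/-- A Laurent polynomial `f` (a finitely supported `ℤ`-valued function on `ℤ²`)
annihilates the configuration `c` if all the coefficients of the formal product
`f · c` vanish. -/
def Annihilates (f : (ℤ × ℤ) →₀ ℤ) (c : ℤ × ℤ → ℤ) : Prop :=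
  ∀ n : ℤ × ℤ, ∑ t ∈ f.support, f t * c (n - t) = 0

namespace NOS


abbrev Cfg := (ℤ × ℤ) → ℤ

/-- Closure characterization in the product of discrete topologies. -/
theorem mem_closure_iff_fin {S : Set Cfg} {y : Cfg} :
    y ∈ closure S ↔ ∀ F : Finset (ℤ × ℤ), ∃ s ∈ S, ∀ x ∈ F, y x = s x := by
  constructor
  · intro hy F
    have hopen : IsOpen {z : Cfg | ∀ x ∈ F, z x = y x} := by
      have : {z : Cfg | ∀ x ∈ F, z x = y x} = ⋂ x ∈ F, (fun z : Cfg => z x) ⁻¹' {y x} := by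
        ext z; simp
      rw [this]
      exact isOpen_biInter_finset fun x _ => (continuous_apply x).isOpen_preimage _ (isOpen_discrete _)
    rcases mem_closure_iff.1 hy _ hopen (fun x _ => rfl) with ⟨s, hs1, hs2⟩
    exact ⟨s, hs2, fun x hx => (hs1 x hx).symm⟩
  · intro h
    rw [mem_closure_iff]
    intro o ho hyo
    rcases isOpen_pi_iff.1 ho y hyo with ⟨I, uu, hI, hsub⟩
    rcases h I with ⟨s, hsS, hs⟩
    refine ⟨s, hsub ?_, hsS⟩
    intro x hx
    rw [← hs x hx]
    exact (hI x hx).2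

theorem translate_translate {A : Type*} (t s : ℤ × ℤ) (d : ℤ × ℤ → A) :
    Translate t (Translate s d) = Translate (t + s) d := by
  funext n; simp [Translate, sub_sub]

theorem translate_zero {A : Type*} (d : ℤ × ℤ → A) : Translate 0 d = d := by
  funext n; simp [Translate]

open scoped Classical in
/-- Ultrafilter limit of a sequence of configurations. -/
noncomputable def ULim (U : Ultrafilter ℕ) (d : ℕ → Cfg) : Cfg := fun x =>
  if h : ∃ v : ℤ, {m | d m x = v} ∈ U then h.choose else 0

theorem ULim_spec {U : Ultrafilter ℕ} {d : ℕ → Cfg} {x : ℤ × ℤ}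
    (h : ∃ v : ℤ, {m | d m x = v} ∈ U) : {m | d m x = ULim U d x} ∈ U := by
  classical
  rw [ULim]
  rw [dif_pos h]
  exact h.choose_spec

/-- If the values live in a finite set, the ultrafilter value exists. -/
theorem ULim_exists {U : Ultrafilter ℕ} {d : ℕ → Cfg} {x : ℤ × ℤ}
    {A : Finset ℤ} (hA : ∀ m, d m x ∈ A) : ∃ v : ℤ, {m | d m x = v} ∈ U := by
  by_contra hc
  push_neg at hc
  have : ∀ v : ℤ, {m | d m x = v}ᶜ ∈ U := fun v => Ultrafilter.compl_mem_iff_notMem.2 (hc v)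
  have h2 : (⋂ v ∈ A, {m | d m x = v}ᶜ) ∈ U := by
    exact (Filter.biInter_finset_mem A).2 fun v _ => this v
  rcases U.nonempty_of_mem h2 with ⟨m, hm⟩
  simp only [Set.mem_iInter, Set.mem_compl_iff, Set.mem_setOf_eq] at hm
  exact hm (d m x) (hA m) rfl

theorem ULim_eq_of {U : Ultrafilter ℕ} {d : ℕ → Cfg} {x : ℤ × ℤ} {v : ℤ}
    (h : ∃ w : ℤ, {m | d m x = w} ∈ U) (hv : {m | d m x = v} ∈ U) :
    ULim U d x = v := by
  have h1 := ULim_spec h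
  by_contra hne
  have : {m | d m x = ULim U d x} ∩ {m | d m x = v} ∈ U := Filter.inter_mem h1 hv
  rcases U.nonempty_of_mem this with ⟨m, hm1, hm2⟩
  exact hne (hm1 ▸ hm2 ▸ rfl : ULim U d x = v)



/-- convolution kernel equation -/
def KerEq (P : Finset ℤ) (p : ℤ → ℤ) (s : ℤ → ℤ) : Prop :=
  ∀ n : ℤ, ∑ j ∈ P, p j * s (n - j) = 0

section OneD

variable {P : Finset ℤ} {p : ℤ → ℤ}

theorem kerEq_shift {s : ℤ → ℤ} (h : KerEq P p s) (T : ℤ) :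
    KerEq P p (fun n => s (n + T)) := by
  intro n
  have := h (n + T)
  simpa [add_sub_right_comm] using this

theorem kerEq_sub {s t : ℤ → ℤ} (hs : KerEq P p s) (ht : KerEq P p t) :
    KerEq P p (fun n => s n - t n) := by
  intro n
  have h1 := hs n; have h2 := ht n
  have : ∑ j ∈ P, (p j * s (n - j) - p j * t (n - j)) = 0 := by
    rw [Finset.sum_sub_distrib, h1, h2, sub_zero]
  simpa [mul_sub] using this

variable (hne : (P.filter (fun j => p j ≠ 0)).Nonempty)

/-- uniqueness: a kernel sequence vanishing on a long window vanishes. -/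
theorem ker_zero_of_window (hne : (P.filter (fun j => p j ≠ 0)).Nonempty)
    {s : ℤ → ℤ} (hker : KerEq P p s) (n₀ : ℤ)
    (hwin : ∀ x : ℤ, n₀ ≤ x → x ≤ n₀ + ((P.filter (fun j => p j ≠ 0)).max' hne
        - (P.filter (fun j => p j ≠ 0)).min' hne) → s x = 0) :
    ∀ x, s x = 0 := by
  classical
  set Pn := P.filter (fun j => p j ≠ 0) with hPn
  set kmin := Pn.min' hne with hkmin
  set kmax := Pn.max' hne with hkmax
  set D := kmax - kmin with hD
  have hkminP : kmin ∈ P := (Finset.mem_filter.1 (Pn.min'_mem hne)).1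
  have hkmaxP : kmax ∈ P := (Finset.mem_filter.1 (Pn.max'_mem hne)).1
  have hpmin : p kmin ≠ 0 := (Finset.mem_filter.1 (Pn.min'_mem hne)).2
  have hpmax : p kmax ≠ 0 := (Finset.mem_filter.1 (Pn.max'_mem hne)).2
  have hD0 : 0 ≤ D := sub_nonneg.2 (Pn.min'_le _ (Pn.max'_mem hne))
  -- upward
  have up : ∀ m : ℕ, ∀ x : ℤ, n₀ ≤ x → x ≤ n₀ + D + m → s x = 0 := by
    intro m
    induction m with
    | zero => intro x h1 h2; exact hwin x h1 (by simpa using h2)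
    | succ m ih =>
      intro x h1 h2
      rcases lt_or_ge (n₀ + D + m) x with hgt | hle
      · have hx : x = n₀ + D + m + 1 := le_antisymm (by push_cast at h2 ⊢; omega) (by omega)
        have heq := hker (x + kmin)
        have hsingle : ∑ j ∈ P, p j * s (x + kmin - j) = p kmin * s (x + kmin - kmin) := by
          apply Finset.sum_eq_single_of_mem kmin hkminP
          · intro j hj hjne
            rcases eq_or_ne (p j) 0 with h0 | h0
            · simp [h0]
            · have hjPn : j ∈ Pn := Finset.mem_filter.2 ⟨hj, h0⟩
              have hjmin : kmin ≤ j := Pn.min'_le _ hjPn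
              have hjmax : j ≤ kmax := Pn.le_max' _ hjPn
              have : s (x + kmin - j) = 0 := by
                apply ih
                · omega
                · omega
              simp [this]
        rw [hsingle, add_sub_cancel_right] at heq
        rcases mul_eq_zero.1 heq with h | h
        · exact absurd h hpmin
        · simpa [hx] using h
      · exact ih x h1 hle
  -- downward
  have down : ∀ m : ℕ, ∀ x : ℤ, n₀ - m ≤ x → x ≤ n₀ + D → s x = 0 := by
    intro m
    induction m with
    | zero => intro x h1 h2; exact hwin x (by simpa using h1) h2
    | succ m ih =>
      intro x h1 h2
      rcases lt_or_ge x (n₀ - m) with hlt | hge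
      · have hx : x = n₀ - m - 1 := by omega
        have heq := hker (x + kmax)
        have hsingle : ∑ j ∈ P, p j * s (x + kmax - j) = p kmax * s (x + kmax - kmax) := by
          apply Finset.sum_eq_single_of_mem kmax hkmaxP
          · intro j hj hjne
            rcases eq_or_ne (p j) 0 with h0 | h0
            · simp [h0]
            · have hjPn : j ∈ Pn := Finset.mem_filter.2 ⟨hj, h0⟩
              have hjmin : kmin ≤ j := Pn.min'_le _ hjPn
              have hjmax : j < kmax := lt_of_le_of_ne (Pn.le_max' _ hjPn) hjne
              have : s (x + kmax - j) = 0 := by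
                apply ih
                · omega
                · omega
              simp [this]
        rw [hsingle, add_sub_cancel_right] at heq
        rcases mul_eq_zero.1 heq with h | h
        · exact absurd h hpmax
        · simpa [hx] using h
      · exact ih x hge h2
  intro x
  rcases le_or_gt n₀ x with h | h
  · exact up (x - n₀).toNat x h (by omega)
  · exact down (n₀ - x).toNat x (by omega) (by omega)

/-- periodicity propagates to multiples -/
theorem per_dvd {y : ℤ → ℤ} {T Λ : ℤ} (hT : 1 ≤ T) (hper : ∀ n, y (n + T) = y n)
    (hdvd : T ∣ Λ) (hΛ : 0 ≤ Λ) : ∀ n, y (n + Λ) = y n := by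
  rcases hdvd with ⟨q, hq⟩
  have hq0 : 0 ≤ q := by nlinarith
  have key : ∀ k : ℕ, ∀ n, y (n + T * k) = y n := by
    intro k
    induction k with
    | zero => intro n; simp
    | succ k ih =>
      intro n
      have : n + T * (k + 1 : ℕ) = (n + T * k) + T := by push_cast; ring
      rw [this, hper, ih]
  intro n
  have : Λ = T * (q.toNat : ℤ) := by rw [hq]; congr 1; omega
  rw [this]; exact key q.toNat n

/-- a bounded kernel sequence is periodic, with period at most an explicit bound -/
theorem ker_periodic {P : Finset ℤ} {p : ℤ → ℤ}
    (hne : (P.filter (fun j => p j ≠ 0)).Nonempty)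
    {s : ℤ → ℤ} (hker : KerEq P p s) (C : ℕ) (hC : ∀ n, |s n| ≤ C) :
    ∃ T : ℤ, 1 ≤ T ∧
      T ≤ ((2*C+1)^(((P.filter (fun j => p j ≠ 0)).max' hne
        - (P.filter (fun j => p j ≠ 0)).min' hne).toNat + 1) : ℕ) ∧
      ∀ n, s (n + T) = s n := by
  classical
  obtain ⟨D, hD⟩ : ∃ D : ℤ, D = (P.filter (fun j => p j ≠ 0)).max' hne
      - (P.filter (fun j => p j ≠ 0)).min' hne := ⟨_, rfl⟩
  have hD0 : 0 ≤ D := by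
    rw [hD]
    exact sub_nonneg.2 ((P.filter (fun j => p j ≠ 0)).min'_le _
      ((P.filter (fun j => p j ≠ 0)).max'_mem hne))
  obtain ⟨Dn, hDn⟩ : ∃ Dn : ℕ, (Dn : ℤ) = D := ⟨D.toNat, Int.toNat_of_nonneg hD0⟩
  obtain ⟨NN, hNN⟩ : ∃ NN : ℕ, NN = (2*C+1)^(Dn+1) := ⟨_, rfl⟩
  have hgoalbound : ((2*C+1)^(((P.filter (fun j => p j ≠ 0)).max' hne
        - (P.filter (fun j => p j ≠ 0)).min' hne).toNat + 1) : ℕ) = NN := by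
    rw [hNN, ← hD]
    congr 2
    omega
  set w : ℕ → (Fin (Dn+1) → ℤ) := fun m => (fun i => s (m + i)) with hw
  have hmaps : ∀ m ∈ Finset.range (NN+1), w m ∈ Fintype.piFinset
      (fun _ : Fin (Dn+1) => Finset.Icc (-(C:ℤ)) C) := by
    intro m _
    rw [Fintype.mem_piFinset]
    intro i
    have := hC ((m : ℤ) + i)
    rw [Finset.mem_Icc]
    constructor <;> [linarith [abs_le.1 this |>.1]; linarith [abs_le.1 this |>.2]]
  have hcardlt : (Fintype.piFinset
      (fun _ : Fin (Dn+1) => Finset.Icc (-(C:ℤ)) C)).card < (Finset.range (NN+1)).card := by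
    rw [Finset.card_range, Fintype.card_piFinset]
    have hIcc : (Finset.Icc (-(C:ℤ)) C).card = 2*C+1 := by
      rw [Int.card_Icc]
      omega
    simp only [hIcc, Finset.prod_const, Finset.card_univ, Fintype.card_fin]
    omega
  rcases Finset.exists_ne_map_eq_of_card_lt_of_maps_to hcardlt hmaps with
    ⟨m₁, hm₁, m₂, hm₂, hne12, heqw⟩
  have main : ∀ (a b : ℕ), a ∈ Finset.range (NN+1) → b ∈ Finset.range (NN+1) →
      a < b → w a = w b →
      ∃ T : ℤ, 1 ≤ T ∧ T ≤ (NN : ℤ) ∧ ∀ n, s (n + T) = s n := by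
    intro a b ha hb hab hweq
    refine ⟨(b : ℤ) - a, by omega, ?_, ?_⟩
    · have : b < NN + 1 := Finset.mem_range.1 hb
      push_cast
      omega
    · have hker2 : KerEq P p (fun n => s (n + ((b:ℤ) - a)) - s n) :=
        kerEq_sub (kerEq_shift hker _) hker
      have hzero : ∀ x, (fun n => s (n + ((b:ℤ) - a)) - s n) x = 0 := by
        apply ker_zero_of_window hne hker2 (a : ℤ)
        intro x h1 h2
        rw [← hD] at h2
        have hb2 : (x - a).toNat < Dn + 1 := by omega
        have h3 := congrFun hweq (⟨(x - a).toNat, hb2⟩ : Fin (Dn+1))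
        simp only [hw] at h3
        show s (x + ((b:ℤ) - a)) - s x = 0
        have hival : (((⟨(x - a).toNat, hb2⟩ : Fin (Dn+1)) : ℕ) : ℤ) = x - a := by
          simp only [Fin.val_mk]
          omega
        have e1 : (a : ℤ) + ((⟨(x - a).toNat, hb2⟩ : Fin (Dn+1)) : ℕ) = x := by omega
        have e2 : (b : ℤ) + ((⟨(x - a).toNat, hb2⟩ : Fin (Dn+1)) : ℕ)
            = x + ((b:ℤ) - a) := by omega
        rw [e1, e2] at h3
        omega
      intro n
      have := hzero n
      simpa [sub_eq_zero] using this
  rw [hgoalbound]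
  rcases lt_or_gt_of_ne hne12 with hlt | hlt
  · exact main m₁ m₂ hm₁ hm₂ hlt heqw
  · exact main m₂ m₁ hm₂ hm₁ hlt heqw.symm

/-- telescope: bounded with periodic increment forces zero increment -/
theorem telescope_zero {x y : ℤ → ℤ} {Λ : ℤ} (hΛ : 1 ≤ Λ) (C : ℕ)
    (hx : ∀ n, |x n| ≤ C) (hper : ∀ n, y (n + Λ) = y n)
    (hinc : ∀ n, x (n + Λ) = x n + y n) : ∀ n, y n = 0 := by
  have key : ∀ k : ℕ, ∀ n, x (n + Λ * k) = x n + k * y n := by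
    intro k
    induction k with
    | zero => intro n; simp
    | succ k ih =>
      intro n
      have h1 : n + Λ * (k+1 : ℕ) = (n + Λ * k) + Λ := by push_cast; ring
      have hyper : y (n + Λ * k) = y n := by
        have : ∀ k : ℕ, y (n + Λ * k) = y n := by
          intro k
          induction k with
          | zero => simp
          | succ k ih2 =>
            have : n + Λ * (k+1:ℕ) = (n + Λ * k) + Λ := by push_cast; ring
            rw [this, hper, ih2]
        exact this k
      rw [h1, hinc, ih, hyper]
      push_cast; ring
  intro n
  by_contra hy
  have habs : 1 ≤ |y n| := Int.one_le_abs hy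
  have h1 := key (2*C+1) n
  have h2 := hx (n + Λ * ((2*C+1 : ℕ) : ℤ))
  have h3 := hx n
  rw [h1] at h2
  have hb1 := abs_le.1 h2
  have hb2 := abs_le.1 h3
  rcases hb1 with ⟨hb1a, hb1b⟩
  rcases hb2 with ⟨hb2a, hb2b⟩
  rcases lt_trichotomy (y n) 0 with hyn | hyn | hyn
  · push_cast at hb1a hb1b
    nlinarith
  · exact hy hyn
  · push_cast at hb1a hb1b
    nlinarith

end OneD




section Geometry

variable {u : ℤ × ℤ}

theorem inner2_add (x y u : ℤ × ℤ) : inner2 (x + y) u = inner2 x u + inner2 y u := by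
  simp [inner2]; ring

theorem inner2_sub (x y u : ℤ × ℤ) : inner2 (x - y) u = inner2 x u - inner2 y u := by
  simp [inner2]; ring

theorem inner2_smul (k : ℤ) (x u : ℤ × ℤ) : inner2 (k • x) u = k * inner2 x u := by
  simp [inner2]; ring

theorem inner2_neg (x u : ℤ × ℤ) : inner2 x (-u) = -inner2 x u := by
  simp [inner2]; ring

/-- the gcd of the coordinates, as an integer -/
def gg (u : ℤ × ℤ) : ℤ := (Int.gcd u.1 u.2 : ℤ)

/-- primitive vector orthogonal to `u` -/
def vv (u : ℤ × ℤ) : ℤ × ℤ := (-(u.2 / gg u), u.1 / gg u)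

/-- Bezout vector with `inner2 (ww u) u = gg u` -/
def ww (u : ℤ × ℤ) : ℤ × ℤ := (Int.gcdA u.1 u.2, Int.gcdB u.1 u.2)

theorem gg_pos (hu : u ≠ 0) : 0 < gg u := by
  simp only [gg]
  have hne : u.1.gcd u.2 ≠ 0 := by
    intro h
    rcases Int.gcd_eq_zero_iff.1 h with ⟨h1, h2⟩
    exact hu (Prod.ext h1 h2)
  exact_mod_cast Nat.pos_of_ne_zero hne

theorem gg_dvd_left : gg u ∣ u.1 := Int.gcd_dvd_left u.1 u.2

theorem gg_dvd_right : gg u ∣ u.2 := Int.gcd_dvd_right u.1 u.2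

theorem gg_dvd_inner2 (x : ℤ × ℤ) : gg u ∣ inner2 x u :=
  dvd_add (Dvd.dvd.mul_left gg_dvd_left x.1) (Dvd.dvd.mul_left gg_dvd_right x.2)

theorem inner2_vv (hu : u ≠ 0) : inner2 (vv u) u = 0 := by
  have h1 : gg u * (u.1 / gg u) = u.1 := Int.mul_ediv_cancel' gg_dvd_left
  have h2 : gg u * (u.2 / gg u) = u.2 := Int.mul_ediv_cancel' gg_dvd_right
  have hg := gg_pos hu
  simp only [inner2, vv]
  linear_combination (u.2 / gg u) * h1 - (u.1 / gg u) * h2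

theorem inner2_ww (hu : u ≠ 0) : inner2 (ww u) u = gg u := by
  have := Int.gcd_eq_gcd_ab u.1 u.2
  simp only [inner2, ww, gg]
  linarith [this]

theorem vv_ne_zero (hu : u ≠ 0) : vv u ≠ 0 := by
  intro h
  have h1 : gg u * (u.1 / gg u) = u.1 := Int.mul_ediv_cancel' gg_dvd_left
  have h2 : gg u * (u.2 / gg u) = u.2 := Int.mul_ediv_cancel' gg_dvd_right
  rw [Prod.ext_iff] at h
  simp only [vv] at h
  apply hu
  rw [Prod.ext_iff]
  constructor
  · rw [← h1]
    have : u.1 / gg u = 0 := h.2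
    simp [this]
  · rw [← h2]
    have : u.2 / gg u = 0 := by
      have := h.1
      simp only [Prod.fst_zero] at this
      omega
    simp [this]

/-- anything orthogonal to `u` is a multiple of `vv u` -/
theorem ortho_vv (hu : u ≠ 0) {z : ℤ × ℤ} (hz : inner2 z u = 0) :
    ∃ k : ℤ, z = k • vv u := by
  have h1 : gg u * (u.1 / gg u) = u.1 := Int.mul_ediv_cancel' gg_dvd_left
  have h2 : gg u * (u.2 / gg u) = u.2 := Int.mul_ediv_cancel' gg_dvd_right
  set a := u.1 / gg u with ha
  set b := u.2 / gg u with hb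
  have hg := gg_pos hu
  have hzab : z.1 * a + z.2 * b = 0 := by
    have : gg u * (z.1 * a + z.2 * b) = gg u * 0 := by
      rw [mul_zero, ← hz]
      simp only [inner2]
      linear_combination z.1 * h1 + z.2 * h2
    exact mul_left_cancel₀ (ne_of_gt hg) this
  have hco : IsCoprime a b := by
    rw [Int.isCoprime_iff_gcd_eq_one]
    have : 0 < Int.gcd u.1 u.2 := by
      have := gg_pos hu; simp only [gg] at this; exact_mod_cast this
    exact Int.gcd_div_gcd_div_gcd this
  rcases hco with ⟨α, β, hαβ⟩
  refine ⟨α * z.2 - β * z.1, ?_⟩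
  have hva : (vv u).1 = -b := rfl
  have hvb : (vv u).2 = a := rfl
  rw [Prod.ext_iff]
  constructor
  · show z.1 = (α * z.2 - β * z.1) * (vv u).1
    rw [hva]
    linear_combination (-z.1) * hαβ + α * hzab
  · show z.2 = (α * z.2 - β * z.1) * (vv u).2
    rw [hvb]
    linear_combination (-z.2) * hαβ + β * hzab

end Geometry


section F1

variable {u : ℤ × ℤ}

theorem smul_vv_inj (hu : u ≠ 0) {j j' : ℤ} (h : j • vv u = j' • vv u) : j = j' := by
  have h1 : j * (vv u).1 = j' * (vv u).1 := congrArg Prod.fst h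
  have h2 : j * (vv u).2 = j' * (vv u).2 := congrArg Prod.snd h
  have hv := vv_ne_zero hu
  rcases eq_or_ne (vv u).1 0 with hv1 | hv1
  · have hv2 : (vv u).2 ≠ 0 := by
      intro hv2
      exact hv (Prod.ext hv1 hv2)
    exact mul_right_cancel₀ hv2 h2
  · exact mul_right_cancel₀ hv1 h1

/-- level is invariant under translation along `vv u` -/
theorem lam_vv (hu : u ≠ 0) (x : ℤ × ℤ) (k : ℤ) :
    inner2 (x + k • vv u) u = inner2 x u := by
  rw [inner2_add, inner2_smul, inner2_vv hu, mul_zero, add_zero]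

/-- The key periodicity theorem: a bounded configuration annihilated by `f`
whose support lies in a lower half plane is periodic in the direction `vv u`. -/
theorem exists_Vper {f : (ℤ × ℤ) →₀ ℤ} (hf : f ≠ 0) (hu : u ≠ 0)
    {z : (ℤ × ℤ) → ℤ} (C : ℕ) (hzC : ∀ x, |z x| ≤ C)
    (hker : ∀ n : ℤ × ℤ, ∑ t ∈ f.support, f t * z (n - t) = 0)
    (ℓ₀ : ℤ) (hsupp : ∀ x, ℓ₀ < inner2 x u → z x = 0) :
    ∃ Λ : ℕ, 1 ≤ Λ ∧ ∀ x : ℤ × ℤ, z (x + (Λ : ℤ) • vv u) = z x := by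
  classical
  have hsne : f.support.Nonempty := Finsupp.support_nonempty_iff.2 hf
  have hsneim : (f.support.image (fun t => inner2 t u)).Nonempty := hsne.image _
  set M : ℤ := (f.support.image (fun t => inner2 t u)).max' hsneim with hM
  obtain ⟨tstar, htstar, htM⟩ : ∃ t ∈ f.support, inner2 t u = M := by
    have hmem := (f.support.image (fun t => inner2 t u)).max'_mem hsneim
    rw [← hM] at hmem
    rcases Finset.mem_image.1 hmem with ⟨t, ht, hteq⟩
    exact ⟨t, ht, hteq⟩
  have hle : ∀ t ∈ f.support, inner2 t u ≤ M := fun t ht =>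
    (f.support.image (fun t => inner2 t u)).le_max' _ (Finset.mem_image_of_mem _ ht)
  set R : ℤ := f.support.sup' hsne (fun t => |t.1 - tstar.1| + |t.2 - tstar.2|) with hR
  have hR0 : 0 ≤ R := by
    have h2 := Finset.le_sup' (fun t : ℤ×ℤ => |t.1 - tstar.1| + |t.2 - tstar.2|) htstar
    rw [← hR] at h2
    have h1 : (0:ℤ) ≤ |tstar.1 - tstar.1| + |tstar.2 - tstar.2| := by positivity
    linarith
  set P : Finset ℤ := Finset.Icc (-R) R with hP
  set p : ℤ → ℤ := fun j => f (tstar + j • vv u) with hp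
  have hp0 : p 0 ≠ 0 := by
    simp only [hp, zero_smul, add_zero]
    exact Finsupp.mem_support_iff.1 htstar
  have h0P : (0:ℤ) ∈ P := by rw [hP]; rw [Finset.mem_Icc]; omega
  have hnep : (P.filter (fun j => p j ≠ 0)).Nonempty :=
    ⟨0, Finset.mem_filter.2 ⟨h0P, hp0⟩⟩
  -- the face sum identity
  have hface : ∀ q : ℤ × ℤ,
      ∑ t ∈ f.support.filter (fun t => inner2 t u = M), f t * z (q - t)
        = ∑ j ∈ P, p j * z (q - tstar - j • vv u) := by
    intro q
    have hzero : ∀ j ∈ P, j ∉ P.filter (fun j => p j ≠ 0) →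
        p j * z (q - tstar - j • vv u) = 0 := by
      intro j hjP hjn
      have : ¬ (p j ≠ 0) := fun hc => hjn (Finset.mem_filter.2 ⟨hjP, hc⟩)
      push_neg at this
      rw [this, zero_mul]
    rw [← Finset.sum_subset (Finset.filter_subset _ P) hzero]
    apply Finset.sum_bij' (i := fun t _ => if h : inner2 (t - tstar) u = 0 then
        (ortho_vv hu h).choose else 0)
      (j := fun b _ => tstar + b • vv u)
    · -- hi : maps into P'
      intro t ht
      rcases Finset.mem_filter.1 ht with ⟨hts, htl⟩
      have hortho : inner2 (t - tstar) u = 0 := by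
        rw [inner2_sub, htl, htM, sub_self]
      rw [dif_pos hortho]
      set k := (ortho_vv hu hortho).choose with hk
      have hspec : t - tstar = k • vv u := (ortho_vv hu hortho).choose_spec
      have hteq : tstar + k • vv u = t := by rw [← hspec]; abel
      refine Finset.mem_filter.2 ⟨?_, ?_⟩
      · rw [hP, Finset.mem_Icc]
        have hk1 : t.1 - tstar.1 = k * (vv u).1 := by
          have := congrArg Prod.fst hspec; simpa using this
        have hk2 : t.2 - tstar.2 = k * (vv u).2 := by
          have := congrArg Prod.snd hspec; simpa using this
        have hRb := Finset.le_sup' (fun t : ℤ×ℤ => |t.1 - tstar.1| + |t.2 - tstar.2|) hts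
        rw [← hR] at hRb
        have habs : |k| ≤ R := by
          rcases eq_or_ne ((vv u).1) 0 with hv1 | hv1
          · have hv2 : (vv u).2 ≠ 0 := by
              intro hv2; exact vv_ne_zero hu (Prod.ext hv1 hv2)
            have hmul : |k| * 1 ≤ |k| * |(vv u).2| :=
              mul_le_mul_of_nonneg_left (Int.one_le_abs hv2) (abs_nonneg k)
            calc |k| = |k| * 1 := by ring
              _ ≤ |k| * |(vv u).2| := hmul
              _ = |t.2 - tstar.2| := by rw [← abs_mul, ← hk2]
              _ ≤ |t.1 - tstar.1| + |t.2 - tstar.2| := le_add_of_nonneg_left (abs_nonneg _)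
              _ ≤ R := hRb
          · have hmul : |k| * 1 ≤ |k| * |(vv u).1| :=
              mul_le_mul_of_nonneg_left (Int.one_le_abs hv1) (abs_nonneg k)
            calc |k| = |k| * 1 := by ring
              _ ≤ |k| * |(vv u).1| := hmul
              _ = |t.1 - tstar.1| := by rw [← abs_mul, ← hk1]
              _ ≤ |t.1 - tstar.1| + |t.2 - tstar.2| := le_add_of_nonneg_right (abs_nonneg _)
              _ ≤ R := hRb
        constructor
        · linarith [neg_abs_le k]
        · linarith [le_abs_self k]
      · show p k ≠ 0
        rw [hp]
        simp only []
        rw [hteq]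
        exact Finsupp.mem_support_iff.1 hts
    · -- hj : maps back into face
      intro b hb
      rcases Finset.mem_filter.1 hb with ⟨hbP, hbp⟩
      refine Finset.mem_filter.2 ⟨?_, ?_⟩
      · exact Finsupp.mem_support_iff.2 hbp
      · have hlam : inner2 (tstar + b • vv u) u = M := by
          rw [lam_vv hu, htM]
        exact hlam
    · -- left inverse
      intro t ht
      rcases Finset.mem_filter.1 ht with ⟨hts, htl⟩
      have hortho : inner2 (t - tstar) u = 0 := by
        rw [inner2_sub, htl, htM, sub_self]
      rw [dif_pos hortho]
      have hspec : t - tstar = (ortho_vv hu hortho).choose • vv u :=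
        (ortho_vv hu hortho).choose_spec
      rw [← hspec]; abel
    · -- right inverse
      intro b hb
      have hortho : inner2 ((tstar + b • vv u) - tstar) u = 0 := by
        have : (tstar + b • vv u) - tstar = b • vv u := by abel
        rw [this, inner2_smul, inner2_vv hu, mul_zero]
      rw [dif_pos hortho]
      have hspec : (tstar + b • vv u) - tstar = (ortho_vv hu hortho).choose • vv u :=
        (ortho_vv hu hortho).choose_spec
      have hthis : (tstar + b • vv u) - tstar = b • vv u := by abel
      exact smul_vv_inj hu (hspec.symm.trans hthis)
    · -- values agree
      intro t ht
      rcases Finset.mem_filter.1 ht with ⟨hts, htl⟩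
      have hortho : inner2 (t - tstar) u = 0 := by
        rw [inner2_sub, htl, htM, sub_self]
      rw [dif_pos hortho]
      set k := (ortho_vv hu hortho).choose with hk
      have hspec : t - tstar = k • vv u := (ortho_vv hu hortho).choose_spec
      have hteq : tstar + k • vv u = t := by rw [← hspec]; abel
      have hq : q - tstar - k • vv u = q - t := by rw [← hteq]; abel
      rw [hq]
      congr 1
      show f t = p k
      rw [hp]; simp only []; rw [hteq]
  -- splitting of the annihilation equation
  set REST : Finset (ℤ×ℤ) := f.support.filter (fun t => ¬ inner2 t u = M) with hREST
  have hsplit : ∀ q : ℤ×ℤ, (∑ j ∈ P, p j * z (q - tstar - j • vv u))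
      + ∑ t ∈ REST, f t * z (q - t) = 0 := by
    intro q
    rw [← hface q, hREST]
    rw [Finset.sum_filter_add_sum_filter_not f.support (fun t => inner2 t u = M)
      (fun t => f t * z (q - t))]
    exact hker q
  -- set up the uniform period
  set Pn : Finset ℤ := P.filter (fun j => p j ≠ 0) with hPn
  set Bnd : ℕ := (2*(2*C)+1)^((Pn.max' hnep - Pn.min' hnep).toNat + 1) with hBnd
  set Λ : ℕ := Nat.factorial Bnd with hΛ
  have hΛ1 : 1 ≤ Λ := Nat.one_le_iff_ne_zero.2 (Nat.factorial_ne_zero Bnd)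
  refine ⟨Λ, hΛ1, ?_⟩
  have STEP : ∀ x : ℤ×ℤ,
      (∀ x' : ℤ×ℤ, inner2 x u < inner2 x' u → z (x' + (Λ:ℤ) • vv u) = z x') →
      z (x + (Λ:ℤ) • vv u) = z x := by
    intro x IH
    rcases lt_or_ge ℓ₀ (inner2 x u) with htop | htop
    · have h1 := hsupp x htop
      have h2 := hsupp (x + (Λ:ℤ) • vv u) (by rw [lam_vv hu]; exact htop)
      rw [h1, h2]
    · set s : ℤ → ℤ := fun k => z (x + k • vv u) with hs
      set y : ℤ → ℤ := fun k => s (k + Λ) - s k with hy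
      have hconv : ∀ m : ℤ, ∑ j ∈ P, p j * s (m - j)
          = - ∑ t ∈ REST, f t * z (x + m • vv u + tstar - t) := by
        intro m
        have h1 := hsplit (x + m • vv u + tstar)
        have h2 : ∑ j ∈ P, p j * z ((x + m • vv u + tstar) - tstar - j • vv u)
            = ∑ j ∈ P, p j * s (m - j) := by
          apply Finset.sum_congr rfl
          intro j _
          congr 1
          show z (x + m • vv u + tstar - tstar - j • vv u) = z (x + (m - j) • vv u)
          congr 1
          rw [sub_smul]
          abel
        rw [h2] at h1
        linarith [h1]
      have hkerY : KerEq P p y := by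
        intro n
        have e1 : ∑ j ∈ P, p j * y (n - j)
            = (∑ j ∈ P, p j * s ((n + (Λ:ℤ)) - j)) - ∑ j ∈ P, p j * s (n - j) := by
          rw [← Finset.sum_sub_distrib]
          apply Finset.sum_congr rfl
          intro j _
          have hidx : n - j + (Λ:ℤ) = n + (Λ:ℤ) - j := by ring
          simp only [hy]
          rw [hidx]
          ring
        rw [e1, hconv, hconv]
        have hRE : ∀ t ∈ REST, f t * z (x + (n + (Λ:ℤ)) • vv u + tstar - t)
            = f t * z (x + n • vv u + tstar - t) := by
          intro t ht
          rcases Finset.mem_filter.1 ht with ⟨hts, htne⟩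
          have hlt : inner2 t u < M := lt_of_le_of_ne (hle t hts) htne
          have harg : x + (n + (Λ:ℤ)) • vv u + tstar - t
              = (x + n • vv u + tstar - t) + (Λ:ℤ) • vv u := by
            rw [add_smul]; abel
          rw [harg]
          congr 1
          apply IH
          rw [inner2_sub, inner2_add, lam_vv hu]
          have h9 : inner2 tstar u = M := htM
          omega
        rw [Finset.sum_congr rfl hRE]
        ring
      have hyC : ∀ n, |y n| ≤ (2*C : ℕ) := by
        intro n
        simp only [hy]
        calc |s (n + (Λ:ℤ)) - s n| ≤ |s (n + (Λ:ℤ))| + |s n| := abs_sub _ _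
          _ ≤ C + C := add_le_add (hzC _) (hzC _)
          _ = ((2*C : ℕ) : ℤ) := by push_cast; ring
      obtain ⟨T, hT1, hTle, hTper⟩ := ker_periodic hnep hkerY (2*C) hyC
      have hTd : T ∣ (Λ:ℤ) := by
        have h1 : T.toNat ∣ Λ := by
          rw [hΛ]
          apply Nat.dvd_factorial
          · omega
          · rw [← hBnd] at hTle
            omega
        have := Int.natCast_dvd_natCast.2 h1
        rwa [Int.toNat_of_nonneg (by omega : (0:ℤ) ≤ T)] at this
      have hyΛ : ∀ n, y (n + (Λ:ℤ)) = y n :=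
        per_dvd hT1 hTper hTd (by positivity)
      have hy0 : ∀ n, y n = 0 := by
        apply telescope_zero (x := s) (by exact_mod_cast hΛ1) C (fun n => hzC _) hyΛ
        intro n
        simp only [hy]
        ring
      have hfin := hy0 0
      simp only [hy, zero_add] at hfin
      have hs0 : s 0 = z x := by simp only [hs, zero_smul, add_zero]
      have hsΛ : s (Λ:ℤ) = z (x + (Λ:ℤ) • vv u) := rfl
      rw [hs0, hsΛ] at hfin
      linarith [hfin]
  have OUTER : ∀ N : ℕ, ∀ x : ℤ×ℤ, ℓ₀ - N ≤ inner2 x u →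
      z (x + (Λ:ℤ) • vv u) = z x := by
    intro N
    induction N with
    | zero =>
      intro x hx
      apply STEP x
      intro x' hx'
      have h1 : ℓ₀ < inner2 x' u := by omega
      rw [hsupp _ h1, hsupp _ (by rw [lam_vv hu]; exact h1)]
    | succ N ihN =>
      intro x hx
      rcases le_or_gt (ℓ₀ - N) (inner2 x u) with h | h
      · exact ihN x h
      · apply STEP x
        intro x' hx'
        apply ihN
        omega
  intro x
  exact OUTER (ℓ₀ - inner2 x u).toNat x (by omega)

end F1



section ULimMore

/-- ULim of members of a closed set with finitely many values is a member. -/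
theorem ULim_mem {U : Ultrafilter ℕ} {d : ℕ → Cfg} {S : Set Cfg} (hScl : IsClosed S)
    (hd : ∀ m, d m ∈ S) {A : Finset ℤ} (hA : ∀ m x, d m x ∈ A) :
    ULim U d ∈ S := by
  rw [← hScl.closure_eq]
  rw [mem_closure_iff_fin]
  intro F
  have hspec : ∀ x ∈ F, {m | d m x = ULim U d x} ∈ U := by
    intro x _
    exact ULim_spec (ULim_exists (fun m => hA m x))
  have hins : (⋂ x ∈ F, {m | d m x = ULim U d x}) ∈ U :=
    (Filter.biInter_finset_mem F).2 hspec
  rcases U.nonempty_of_mem hins with ⟨m, hm⟩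
  simp only [Set.mem_iInter, Set.mem_setOf_eq] at hm
  exact ⟨d m, hd m, fun x hx => (hm x hx).symm⟩

theorem ULim_eq_target {U : Ultrafilter ℕ} {d : ℕ → Cfg} {y : Cfg}
    (h : ∀ x, {m | d m x = y x} ∈ U) : ULim U d = y := by
  funext x
  exact ULim_eq_of ⟨y x, h x⟩ (h x)

/-- pigeonhole a `U`-large existential over a finite set -/
theorem ULim_pigeon {U : Ultrafilter ℕ} {β : Type*} {F : Finset β} {Q : β → ℕ → Prop}
    (h : {m | ∃ b ∈ F, Q b m} ∈ U) : ∃ b ∈ F, {m | Q b m} ∈ U := by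
  by_contra hc
  push_neg at hc
  have hcompl : ∀ b ∈ F, {m | Q b m}ᶜ ∈ U := fun b hb =>
    Ultrafilter.compl_mem_iff_notMem.2 (hc b hb)
  have hins : (⋂ b ∈ F, {m | Q b m}ᶜ) ∈ U := (Filter.biInter_finset_mem F).2 hcompl
  rcases U.nonempty_of_mem (Filter.inter_mem h hins) with ⟨m, hm1, hm2⟩
  rcases hm1 with ⟨b, hb, hQ⟩
  simp only [Set.mem_iInter, Set.mem_compl_iff, Set.mem_setOf_eq] at hm2
  exact hm2 b hb hQ

end ULimMore

section Dyn

variable {Y : Set Cfg} {u : ℤ × ℤ}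

/-- The Gap Lemma: in a deterministic direction, differences propagate downwards
with uniformly bounded gaps. -/
theorem gap_lemma (hYcl : IsClosed Y)
    (hYinv : ∀ (t : ℤ×ℤ), ∀ d ∈ Y, Translate t d ∈ Y)
    {A : Finset ℤ} (hYA : ∀ d ∈ Y, ∀ x, d x ∈ A)
    (hdet : DeterministicIn Y u) :
    ∃ Gs : ℕ, 1 ≤ Gs ∧ ∀ d ∈ Y, ∀ e ∈ Y, ∀ x : ℤ×ℤ, d x ≠ e x →
      ∃ x' : ℤ×ℤ, d x' ≠ e x' ∧ inner2 x' u < inner2 x u ∧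
        inner2 x u - Gs ≤ inner2 x' u := by
  by_contra hc
  push_neg at hc
  -- for every G there is a counterexample
  have hcex : ∀ m : ℕ, ∃ d ∈ Y, ∃ e ∈ Y, ∃ x : ℤ×ℤ, d x ≠ e x ∧
      ∀ x' : ℤ×ℤ, inner2 x' u < inner2 x u → inner2 x u - (m+1 : ℕ) ≤ inner2 x' u →
        d x' = e x' := by
    intro m
    rcases hc (m+1) (by omega) with ⟨d, hd, e, he, x, hx, hall⟩
    refine ⟨d, hd, e, he, x, hx, ?_⟩
    intro x' h1 h2
    by_contra hne
    have h9 := hall x' hne h1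
    omega
  choose d hd e he x hx hall using hcex
  set U : Ultrafilter ℕ := Filter.hyperfilter ℕ with hU
  set D : ℕ → Cfg := fun m => Translate (-(x m)) (d m) with hD
  set E : ℕ → Cfg := fun m => Translate (-(x m)) (e m) with hE
  have hDY : ∀ m, D m ∈ Y := fun m => hYinv _ _ (hd m)
  have hEY : ∀ m, E m ∈ Y := fun m => hYinv _ _ (he m)
  have hDA : ∀ m n, D m n ∈ A := fun m n => hYA _ (hDY m) n
  have hEA : ∀ m n, E m n ∈ A := fun m n => hYA _ (hEY m) n
  have hDlY : ULim U D ∈ Y := ULim_mem hYcl hDY hDA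
  have hElY : ULim U E ∈ Y := ULim_mem hYcl hEY hEA
  have heqon : Set.EqOn (ULim U D) (ULim U E) (halfPlane u) := by
    intro n hn
    have hlt : inner2 n u < 0 := hn
    have hbig : {m : ℕ | D m n = E m n} ∈ U := by
      apply Filter.mem_of_superset
        (Filter.mem_hyperfilter_of_finite_compl (s := {m : ℕ | (- inner2 n u) ≤ (m:ℤ) + 1}) ?_)
      · intro m hm
        show D m n = E m n
        have harg : n - (-(x m)) = n + x m := by abel
        have h1 : inner2 (n + x m) u < inner2 (x m) u := by
          rw [inner2_add]; omega
        have h2 : inner2 (x m) u - ((m+1 : ℕ) : ℤ) ≤ inner2 (n + x m) u := by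
          rw [inner2_add]
          simp only [Set.mem_setOf_eq] at hm
          push_cast
          omega
        show (Translate (-(x m)) (d m)) n = (Translate (-(x m)) (e m)) n
        show d m (n - (-(x m))) = e m (n - (-(x m)))
        rw [harg]
        exact hall m _ h1 h2
      · -- complement is finite
        have : {m : ℕ | (- inner2 n u) ≤ (m:ℤ) + 1}ᶜ ⊆ ↑(Finset.range ((- inner2 n u).toNat + 1)) := by
          intro m hm
          simp only [Set.mem_compl_iff, Set.mem_setOf_eq, not_le] at hm
          simp only [Finset.coe_range, Set.mem_Iio]
          omega
        exact Set.Finite.subset (Finset.range _).finite_toSet this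
    have hDspec := ULim_spec (U := U) (d := D) (x := n) (ULim_exists (fun m => hDA m n))
    have hEspec := ULim_spec (U := U) (d := E) (x := n) (ULim_exists (fun m => hEA m n))
    rcases U.nonempty_of_mem (Filter.inter_mem hbig (Filter.inter_mem hDspec hEspec)) with
      ⟨m, hm1, hm2, hm3⟩
    simp only [Set.mem_setOf_eq] at hm1 hm2 hm3
    rw [← hm2, ← hm3]
    exact hm1
  have heq := hdet (ULim U D) hDlY (ULim U E) hElY heqon
  -- but they differ at 0
  have hDspec := ULim_spec (U := U) (d := D) (x := 0) (ULim_exists (fun m => hDA m 0))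
  have hEspec := ULim_spec (U := U) (d := E) (x := 0) (ULim_exists (fun m => hEA m 0))
  rcases U.nonempty_of_mem (Filter.inter_mem hDspec hEspec) with ⟨m, hm2, hm3⟩
  simp only [Set.mem_setOf_eq] at hm2 hm3
  have h0 : D m 0 ≠ E m 0 := by
    show (Translate (-(x m)) (d m)) 0 ≠ (Translate (-(x m)) (e m)) 0
    show d m (0 - (-(x m))) ≠ e m (0 - (-(x m)))
    have : (0:ℤ×ℤ) - (-(x m)) = x m := by abel
    rw [this]
    exact hx m
  rw [hm2, hm3, heq] at h0
  exact h0 rfl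

/-- descent: from the gap lemma, a difference hits every window below a difference point -/
theorem descent {Gs : ℕ}
    (hgap : ∀ d ∈ Y, ∀ e ∈ Y, ∀ x : ℤ×ℤ, d x ≠ e x →
      ∃ x' : ℤ×ℤ, d x' ≠ e x' ∧ inner2 x' u < inner2 x u ∧
        inner2 x u - Gs ≤ inner2 x' u)
    {d e : Cfg} (hdY : d ∈ Y) (heY : e ∈ Y) {x₀ : ℤ×ℤ} (hx₀ : d x₀ ≠ e x₀) :
    ∀ ℓ : ℤ, ℓ + Gs ≤ inner2 x₀ u →
      ∃ x : ℤ×ℤ, d x ≠ e x ∧ ℓ ≤ inner2 x u ∧ inner2 x u ≤ ℓ + Gs := by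
  intro ℓ hℓ
  -- strong induction on (inner2 x₀ u - ℓ).toNat
  have main : ∀ N : ℕ, ∀ x₁ : ℤ×ℤ, d x₁ ≠ e x₁ → ℓ ≤ inner2 x₁ u →
      (inner2 x₁ u - ℓ).toNat ≤ N →
      ∃ x : ℤ×ℤ, d x ≠ e x ∧ ℓ ≤ inner2 x u ∧ inner2 x u ≤ ℓ + Gs := by
    intro N
    induction N with
    | zero =>
      intro x₁ h1 h2 h3
      exact ⟨x₁, h1, h2, by omega⟩
    | succ N ih =>
      intro x₁ h1 h2 h3
      rcases le_or_gt (inner2 x₁ u) (ℓ + Gs) with hcase | hcase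
      · exact ⟨x₁, h1, h2, hcase⟩
      · rcases hgap d hdY e heY x₁ h1 with ⟨x₂, hx₂, hlt, hge⟩
        apply ih x₂ hx₂ (by omega) (by omega)
  exact main (inner2 x₀ u - ℓ).toNat x₀ hx₀ (by omega) (by omega)

end Dyn


section TSM

variable {u : ℤ × ℤ}

/-- periodicity with period `Λ • vv u` -/
def Vper (u : ℤ × ℤ) (Λ : ℕ) (W : Cfg) : Prop :=
  ∀ x, W (x + (Λ:ℤ) • vv u) = W x

/-- two-sided: nonzero in every level slab of height `Gs` -/
def TSp (u : ℤ × ℤ) (Gs : ℕ) (W : Cfg) : Prop :=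
  ∀ ℓ : ℤ, ∃ x, W x ≠ 0 ∧ ℓ ≤ inner2 x u ∧ inner2 x u ≤ ℓ + Gs

theorem Vper_sub {Λ : ℕ} {a b : Cfg} (ha : Vper u Λ a) (hb : Vper u Λ b) :
    Vper u Λ (fun x => a x - b x) := by
  intro x; simp only [ha x, hb x]

theorem Vper_translate {Λ : ℕ} {W : Cfg} (h : Vper u Λ W) (t : ℤ×ℤ) :
    Vper u Λ (Translate t W) := by
  intro x
  show W (x + (Λ:ℤ) • vv u - t) = W (x - t)
  have harg : x + (Λ:ℤ) • vv u - t = (x - t) + (Λ:ℤ) • vv u := by abel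
  rw [harg, h]

theorem Vper_iter {Λ : ℕ} {W : Cfg} (h : Vper u Λ W) :
    ∀ k : ℤ, ∀ x, W (x + k • ((Λ:ℤ) • vv u)) = W x := by
  have hneg : ∀ x, W (x - (Λ:ℤ) • vv u) = W x := by
    intro x
    have := h (x - (Λ:ℤ) • vv u)
    have harg : x - (Λ:ℤ) • vv u + (Λ:ℤ) • vv u = x := by abel
    rw [harg] at this
    exact this.symm
  intro k
  induction k using Int.induction_on with
  | zero => intro x; simp
  | succ n ih =>
    intro x
    have harg : x + ((n:ℤ)+1) • ((Λ:ℤ) • vv u)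
        = (x + (Λ:ℤ) • vv u) + (n:ℤ) • ((Λ:ℤ) • vv u) := by
      rw [add_smul, one_smul]; abel
    rw [harg, ih, h]
  | pred n ih =>
    intro x
    have harg : x + (-(n:ℤ)-1) • ((Λ:ℤ) • vv u)
        = (x - (Λ:ℤ) • vv u) + (-(n:ℤ)) • ((Λ:ℤ) • vv u) := by
      rw [sub_smul, neg_smul]
      have : (1:ℤ) • ((Λ:ℤ) • vv u) = (Λ:ℤ) • vv u := one_smul _ _
      rw [this]
      abel
    rw [harg, ih, hneg]

theorem TSp_translate {Gs : ℕ} {W : Cfg} (h : TSp u Gs W) (t : ℤ×ℤ) :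
    TSp u Gs (Translate t W) := by
  intro ℓ
  rcases h (ℓ - inner2 t u) with ⟨x₁, hW, h1, h2⟩
  refine ⟨x₁ + t, ?_, ?_, ?_⟩
  · show W (x₁ + t - t) ≠ 0
    have : x₁ + t - t = x₁ := by abel
    rw [this]; exact hW
  · rw [inner2_add]; omega
  · rw [inner2_add]; omega

/-- fundamental domain for a level slab modulo the period -/
noncomputable def FD (u : ℤ × ℤ) (Λ Gs : ℕ) (ℓ : ℤ) : Finset (ℤ×ℤ) :=
  ((Finset.Icc (-(|ℓ|+Gs+1)) (|ℓ|+Gs+1)) ×ˢ Finset.range Λ).image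
    (fun q => q.1 • ww u + (q.2:ℤ) • vv u)

/-- every point of the slab is a period-translate of a fundamental domain point -/
theorem FD_pin (hu : u ≠ 0) {Λ Gs : ℕ} (hΛ : 1 ≤ Λ) {ℓ : ℤ} {x : ℤ×ℤ}
    (h1 : ℓ ≤ inner2 x u) (h2 : inner2 x u ≤ ℓ + Gs) :
    ∃ x' ∈ FD u Λ Gs ℓ, inner2 x' u = inner2 x u ∧
      ∃ k : ℤ, x = x' + k • ((Λ:ℤ) • vv u) := by
  classical
  have hg := gg_pos hu
  have hdvd := gg_dvd_inner2 (u := u) x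
  set m : ℤ := inner2 x u / gg u with hm
  have hmg : gg u * m = inner2 x u := Int.mul_ediv_cancel' hdvd
  have hlamw : inner2 (ww u) u = gg u := inner2_ww hu
  have hortho : inner2 (x - m • ww u) u = 0 := by
    rw [inner2_sub, inner2_smul, hlamw]
    linear_combination (-1 : ℤ) * hmg
  rcases ortho_vv hu hortho with ⟨j, hj⟩
  set r : ℤ := j % (Λ:ℤ) with hr
  set q : ℤ := j / (Λ:ℤ) with hq
  have hΛ0 : (0:ℤ) < (Λ:ℤ) := by exact_mod_cast hΛ
  have hr0 : 0 ≤ r := Int.emod_nonneg j (by omega)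
  have hrΛ : r < Λ := Int.emod_lt_of_pos j hΛ0
  have hjd : (Λ:ℤ) * q + r = j := Int.mul_ediv_add_emod j (Λ:ℤ)
  refine ⟨m • ww u + r • vv u, ?_, ?_, q, ?_⟩
  · rw [FD, Finset.mem_image]
    refine ⟨(m, r.toNat), ?_, ?_⟩
    · rw [Finset.mem_product]
      constructor
      · rw [Finset.mem_Icc]
        have hmb : |m| ≤ |inner2 x u| := by
          rcases abs_le.1 (le_refl |m|) with _
          have : |inner2 x u| = |gg u * m| := by rw [hmg]
          rw [this, abs_mul]
          have hg1 : 1 ≤ |gg u| := by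
            rw [abs_of_pos hg]; omega
          nlinarith [abs_nonneg m]
        have : |inner2 x u| ≤ |ℓ| + Gs := by
          rw [abs_le]
          constructor
          · have := neg_abs_le ℓ
            omega
          · have := le_abs_self ℓ
            omega
        constructor
        · have := neg_abs_le m
          omega
        · have := le_abs_self m
          omega
      · rw [Finset.mem_range]
        omega
    · simp only []
      congr 1
      rw [Int.toNat_of_nonneg hr0]
  · rw [inner2_add, inner2_smul, inner2_smul, hlamw, inner2_vv hu]
    linear_combination hmg
  · have hx : x = m • ww u + j • vv u := by
      have : x - m • ww u = j • vv u := hj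
      rw [← this]; abel
    rw [hx]
    rw [← hjd, add_smul, smul_smul, mul_comm (Λ:ℤ) q, ← smul_smul]
    abel

/-- a two-sided periodic difference is nonzero somewhere on the fundamental domain -/
theorem TSp_FD (hu : u ≠ 0) {Λ Gs : ℕ} (hΛ : 1 ≤ Λ) {W : Cfg}
    (hTS : TSp u Gs W) (hV : Vper u Λ W) (ℓ : ℤ) :
    ∃ x' ∈ FD u Λ Gs ℓ, W x' ≠ 0 ∧ ℓ ≤ inner2 x' u ∧ inner2 x' u ≤ ℓ + Gs := by
  rcases hTS ℓ with ⟨x, hW, h1, h2⟩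
  rcases FD_pin hu hΛ h1 h2 with ⟨x', hx'FD, hlam, k, hk⟩
  refine ⟨x', hx'FD, ?_, by omega, by omega⟩
  rw [hk] at hW
  rw [Vper_iter hV k x'] at hW
  exact hW

end TSM


section Fam

variable {Y : Set Cfg} {u : ℤ × ℤ} {Λ Gs : ℕ} {A : Finset ℤ}

/-- families of configurations with pairwise periodic, two-sided differences -/
def TSFam (Y : Set Cfg) (u : ℤ × ℤ) (Λ Gs : ℕ) (n : ℕ) : Prop :=
  ∃ g : Fin n → Cfg, (∀ i, g i ∈ Y) ∧ (∀ i j, Vper u Λ (fun x => g i x - g j x)) ∧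
    (∀ i j, i ≠ j → TSp u Gs (fun x => g i x - g j x))

theorem TSFam_zero : TSFam Y u Λ Gs 0 :=
  ⟨Fin.elim0, fun i => i.elim0, fun i => i.elim0, fun i => i.elim0⟩

theorem TSFam_one {d : Cfg} (hd : d ∈ Y) : TSFam Y u Λ Gs 1 := by
  refine ⟨fun _ => d, fun _ => hd, ?_, ?_⟩
  · intro i j x; simp
  · intro i j hij
    exact absurd (Subsingleton.elim i j) hij

theorem TSFam_bound (hu : u ≠ 0) (hΛ : 1 ≤ Λ)
    (hYA : ∀ d ∈ Y, ∀ x, d x ∈ A) {n : ℕ} (h : TSFam Y u Λ Gs n) :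
    n ≤ A.card ^ (FD u Λ Gs 0).card := by
  classical
  rcases h with ⟨g, hgY, hgV, hgTS⟩
  have hinj : Function.Injective
      (fun (i : Fin n) => (fun (x : ↥(FD u Λ Gs 0)) => (⟨g i x.1, hYA _ (hgY i) _⟩ : ↥A))) := by
    intro i j hij
    by_contra hne
    rcases TSp_FD hu hΛ (hgTS i j hne) (hgV i j) 0 with ⟨x', hx'FD, hx'ne, _, _⟩
    have := congrFun hij (⟨x', hx'FD⟩ : ↥(FD u Λ Gs 0))
    simp only [Subtype.mk.injEq] at this
    exact hx'ne (by simpa [sub_eq_zero] using this)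
  calc n = Fintype.card (Fin n) := (Fintype.card_fin n).symm
    _ ≤ Fintype.card (↥(FD u Λ Gs 0) → ↥A) := Fintype.card_le_of_injective _ hinj
    _ = Fintype.card ↥A ^ Fintype.card ↥(FD u Λ Gs 0) := Fintype.card_fun
    _ = A.card ^ (FD u Λ Gs 0).card := by rw [Fintype.card_coe, Fintype.card_coe]

/-- The limit lemma: pushing a family by translations along an ultrafilter
yields a two-sided family. -/
theorem limit_fam (hu : u ≠ 0) (hΛ : 1 ≤ Λ) (hYcl : IsClosed Y)
    (hYinv : ∀ (t : ℤ×ℤ), ∀ d ∈ Y, Translate t d ∈ Y)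
    (hYA : ∀ d ∈ Y, ∀ x, d x ∈ A)
    {n : ℕ} (g : Fin n → Cfg) (hgY : ∀ i, g i ∈ Y)
    (hgV : ∀ i j, Vper u Λ (fun x => g i x - g j x))
    (t : ℕ → ℤ×ℤ) (U : Ultrafilter ℕ)
    (hTS : ∀ i j : Fin n, i ≠ j → ∀ ℓ : ℤ,
      {m | ∃ x, (g i (x - t m) ≠ g j (x - t m)) ∧ ℓ ≤ inner2 x u ∧ inner2 x u ≤ ℓ + Gs} ∈ U) :
    ∃ g' : Fin n → Cfg, (∀ i, g' i ∈ Y) ∧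
      (∀ i j, Vper u Λ (fun x => g' i x - g' j x)) ∧
      (∀ i j, i ≠ j → TSp u Gs (fun x => g' i x - g' j x)) ∧
      (∀ i, g' i = ULim U (fun m => Translate (t m) (g i))) := by
  classical
  set g' : Fin n → Cfg := fun i => ULim U (fun m => Translate (t m) (g i)) with hg'
  have hval : ∀ i m x, (Translate (t m) (g i)) x ∈ A := fun i m x =>
    hYA _ (hYinv _ _ (hgY i)) x
  have hspec : ∀ i x, {m | (Translate (t m) (g i)) x = g' i x} ∈ U := by
    intro i x
    exact ULim_spec (ULim_exists (fun m => hval i m x))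
  refine ⟨g', ?_, ?_, ?_, fun i => rfl⟩
  · intro i
    exact ULim_mem hYcl (fun m => hYinv _ _ (hgY i)) (hval i)
  · -- Vper of differences
    intro i j x
    have hV : (Λ:ℤ) • vv u = (Λ:ℤ) • vv u := rfl
    have hWm : ∀ m, (Translate (t m) (g i)) (x + (Λ:ℤ) • vv u)
        - (Translate (t m) (g j)) (x + (Λ:ℤ) • vv u)
        = (Translate (t m) (g i)) x - (Translate (t m) (g j)) x := by
      intro m
      have h1 := Vper_translate (u := u) (Λ := Λ)
        (W := fun y => g i y - g j y) (hgV i j) (t m) x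
      show (fun y => (Translate (t m) (g i)) y - (Translate (t m) (g j)) y) (x + (Λ:ℤ) • vv u)
        = (fun y => (Translate (t m) (g i)) y - (Translate (t m) (g j)) y) x
      have heq : (fun y => (Translate (t m) (g i)) y - (Translate (t m) (g j)) y)
          = Translate (t m) (fun y => g i y - g j y) := by
        funext y; rfl
      rw [heq]
      exact h1
    have h1 := hspec i (x + (Λ:ℤ) • vv u)
    have h2 := hspec j (x + (Λ:ℤ) • vv u)
    have h3 := hspec i x
    have h4 := hspec j x
    rcases U.nonempty_of_mem (Filter.inter_mem (Filter.inter_mem h1 h2)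
      (Filter.inter_mem h3 h4)) with ⟨m, ⟨hm1, hm2⟩, hm3, hm4⟩
    simp only [Set.mem_setOf_eq] at hm1 hm2 hm3 hm4
    show g' i (x + (Λ:ℤ) • vv u) - g' j (x + (Λ:ℤ) • vv u) = g' i x - g' j x
    rw [← hm1, ← hm2, ← hm3, ← hm4]
    exact hWm m
  · -- TSp of differences
    intro i j hij ℓ
    have hbig : {m | ∃ x' ∈ FD u Λ Gs ℓ,
        ((Translate (t m) (g i)) x' ≠ (Translate (t m) (g j)) x' ∧
          ℓ ≤ inner2 x' u ∧ inner2 x' u ≤ ℓ + Gs)} ∈ U := by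
      apply Filter.mem_of_superset (hTS i j hij ℓ)
      intro m hm
      rcases hm with ⟨x, hxne, hx1, hx2⟩
      have hWm : Vper u Λ (Translate (t m) (fun y => g i y - g j y)) :=
        Vper_translate (hgV i j) (t m)
      rcases FD_pin hu hΛ hx1 hx2 with ⟨x', hx'FD, hlam, k, hk⟩
      refine ⟨x', hx'FD, ?_, by omega, by omega⟩
      have hx'val : (Translate (t m) (fun y => g i y - g j y)) x' ≠ 0 := by
        have hxval : (Translate (t m) (fun y => g i y - g j y)) x ≠ 0 := by
          show g i (x - t m) - g j (x - t m) ≠ 0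
          exact sub_ne_zero_of_ne hxne
        rw [hk] at hxval
        rwa [Vper_iter hWm k x'] at hxval
      show (Translate (t m) (g i)) x' ≠ (Translate (t m) (g j)) x'
      have : (Translate (t m) (fun y => g i y - g j y)) x'
          = (Translate (t m) (g i)) x' - (Translate (t m) (g j)) x' := rfl
      rw [this] at hx'val
      exact sub_ne_zero.1 hx'val
    rcases ULim_pigeon hbig with ⟨x', hx'FD, hx'U⟩
    have h3 := hspec i x'
    have h4 := hspec j x'
    rcases U.nonempty_of_mem (Filter.inter_mem hx'U (Filter.inter_mem h3 h4)) with
      ⟨m, hm1, hm3, hm4⟩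
    simp only [Set.mem_setOf_eq] at hm1 hm3 hm4
    rcases hm1 with ⟨hne, hb1, hb2⟩
    refine ⟨x', ?_, hb1, hb2⟩
    show g' i x' - g' j x' ≠ 0
    rw [← hm3, ← hm4]
    exact sub_ne_zero_of_ne hne

end Fam


section Main

theorem exists_approx_seq {y₀ y' : Cfg} (h : y' ∈ orbitClosure y₀) :
    ∃ t : ℕ → ℤ×ℤ, ∀ m : ℕ, ∀ x : ℤ×ℤ, x.1.natAbs ≤ m → x.2.natAbs ≤ m →
      y' x = Translate (t m) y₀ x := by
  have hbox : ∀ m : ℕ, ∃ t : ℤ×ℤ, ∀ x : ℤ×ℤ, x.1.natAbs ≤ m → x.2.natAbs ≤ m →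
      y' x = Translate t y₀ x := by
    intro m
    have := (mem_closure_iff_fin (S := orbit y₀) (y := y')).1 h
      (Finset.Icc ((-(m:ℤ), -(m:ℤ))) (((m:ℤ), (m:ℤ))))
    rcases this with ⟨s, hs, hagree⟩
    rcases hs with ⟨t, rfl⟩
    refine ⟨t, fun x h1 h2 => hagree x ?_⟩
    rw [Finset.mem_Icc]
    constructor
    · rw [Prod.le_def]; constructor <;> simp <;> omega
    · rw [Prod.le_def]; constructor <;> simp <;> omega
  choose t ht using hbox
  exact ⟨t, ht⟩

set_option maxHeartbeats 2000000 in
/-- The main theorem: for a minimal subshift annihilated by a nontrivial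
polynomial, determinism in `u` implies determinism in `-u`. -/
theorem det_symm {Y : Set Cfg} (hYcl : IsClosed Y)
    (hYinv : ∀ (t : ℤ×ℤ), ∀ d ∈ Y, Translate t d ∈ Y)
    (hYmin : ∀ y ∈ Y, Y ⊆ orbitClosure y)
    {A : Finset ℤ} (hYA : ∀ d ∈ Y, ∀ x, d x ∈ A)
    {f : (ℤ×ℤ) →₀ ℤ} (hf : f ≠ 0)
    (hYann : ∀ d ∈ Y, ∀ n : ℤ×ℤ, ∑ t ∈ f.support, f t * d (n - t) = 0)
    {u : ℤ×ℤ} (hu : u ≠ 0)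
    (hdet : DeterministicIn Y u) : DeterministicIn Y (-u) := by
  classical
  intro d hd e he heqon
  by_contra hne
  rcases Function.ne_iff.1 hne with ⟨x₀, hx₀⟩
  set w : Cfg := fun x => d x - e x with hw
  have hw_supp : ∀ x : ℤ×ℤ, 0 < inner2 x u → w x = 0 := by
    intro x hx
    have hhp : x ∈ halfPlane (-u) := by
      show inner2 x (-u) < 0
      rw [inner2_neg]
      omega
    have := heqon hhp
    simp only [hw]
    omega
  -- value bound
  set C : ℕ := A.sup (fun a => a.natAbs) with hC
  have hCb : ∀ dd ∈ Y, ∀ x : ℤ×ℤ, |dd x| ≤ (C:ℤ) := by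
    intro dd hdd x
    have hmem := hYA dd hdd x
    have h1 : (dd x).natAbs ≤ C := Finset.le_sup hmem
    rw [Int.abs_eq_natAbs]
    exact_mod_cast h1
  have hwC : ∀ x, |w x| ≤ ((2*C : ℕ) : ℤ) := by
    intro x
    simp only [hw]
    calc |d x - e x| ≤ |d x| + |e x| := abs_sub _ _
      _ ≤ (C:ℤ) + (C:ℤ) := add_le_add (hCb d hd x) (hCb e he x)
      _ = ((2*C : ℕ) : ℤ) := by push_cast; ring
  have hker_w : ∀ n : ℤ×ℤ, ∑ t ∈ f.support, f t * w (n - t) = 0 := by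
    intro n
    have h1 := hYann d hd n
    have h2 := hYann e he n
    have : ∑ t ∈ f.support, (f t * d (n - t) - f t * e (n - t)) = 0 := by
      rw [Finset.sum_sub_distrib, h1, h2, sub_zero]
    rw [← this]
    apply Finset.sum_congr rfl
    intro t _
    simp only [hw]
    ring
  -- V-periodicity of w
  obtain ⟨Λ, hΛ1, hVw'⟩ := exists_Vper hf hu (2*C) hwC hker_w 0 hw_supp
  have hVw : Vper u Λ w := hVw'
  -- gap lemma
  obtain ⟨Gs, hGs1, hgap⟩ := gap_lemma hYcl hYinv hYA hdet
  -- the maximal family size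
  set cap : ℕ := A.card ^ (FD u Λ Gs 0).card with hcap
  set sM : ℕ := Nat.findGreatest (TSFam Y u Λ Gs) cap with hsM
  have hsM_spec : TSFam Y u Λ Gs sM :=
    Nat.findGreatest_spec (Nat.zero_le _) TSFam_zero
  have hsM_max : ∀ n, TSFam Y u Λ Gs n → n ≤ sM := by
    intro n hn
    exact Nat.le_findGreatest (TSFam_bound hu hΛ1 hYA hn) hn
  have hsM1 : 1 ≤ sM := hsM_max 1 (TSFam_one hd)
  obtain ⟨g, hgY, hgV, hgTS⟩ := hsM_spec
  set i0 : Fin sM := ⟨0, hsM1⟩ with hi0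
  -- transport the maximal family so that it is anchored at d
  obtain ⟨t, ht⟩ := exists_approx_seq (hYmin _ (hgY i0) hd)
  set U : Ultrafilter ℕ := Filter.hyperfilter ℕ with hU
  have htrans : ∀ i j : Fin sM, i ≠ j → ∀ ℓ : ℤ,
      {m | ∃ x, (g i (x - t m) ≠ g j (x - t m)) ∧ ℓ ≤ inner2 x u ∧ inner2 x u ≤ ℓ + Gs} ∈ U := by
    intro i j hij ℓ
    apply Filter.univ_mem'
    intro m
    rcases TSp_translate (hgTS i j hij) (t m) ℓ with ⟨x, hxne, h1, h2⟩
    refine ⟨x, ?_, h1, h2⟩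
    have : (Translate (t m) (fun y => g i y - g j y)) x ≠ 0 := hxne
    have h3 : g i (x - t m) - g j (x - t m) ≠ 0 := this
    exact sub_ne_zero.1 h3
  obtain ⟨g', hg'Y, hg'V, hg'TS, hg'eq⟩ :=
    limit_fam (Gs := Gs) hu hΛ1 hYcl hYinv hYA g hgY hgV t U htrans
  have hanchor : g' i0 = d := by
    rw [hg'eq i0]
    apply ULim_eq_target
    intro x
    apply Filter.mem_of_superset (Filter.mem_hyperfilter_of_finite_compl
      (s := {m : ℕ | x.1.natAbs ≤ m ∧ x.2.natAbs ≤ m}) ?_)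
    · intro m hm
      exact (ht m x hm.1 hm.2).symm
    · apply Set.Finite.subset (Finset.range (max x.1.natAbs x.2.natAbs + 1)).finite_toSet
      intro m hm
      simp only [Set.mem_compl_iff, Set.mem_setOf_eq, not_and_or, not_le] at hm
      simp only [Finset.coe_range, Set.mem_Iio]
      omega
  -- augmented family
  set h : Fin (sM+1) → Cfg := Fin.snoc g' e with hh
  have hlast : h (Fin.last sM) = e := by simp only [hh, Fin.snoc_last]
  have hcast : ∀ k : Fin sM, h k.castSucc = g' k := by
    intro k; simp only [hh, Fin.snoc_castSucc]
  have hhY : ∀ i, h i ∈ Y := by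
    intro i
    rcases Fin.eq_castSucc_or_eq_last i with ⟨k, rfl⟩ | rfl
    · rw [hcast]; exact hg'Y k
    · rw [hlast]; exact he
  -- periodicity of differences against e
  have hVd : ∀ i : Fin sM, Vper u Λ (fun x => g' i x - d x) := by
    intro i
    have := hg'V i i0
    rwa [hanchor] at this
  have hVe : ∀ i : Fin sM, Vper u Λ (fun x => g' i x - e x) := by
    intro i x
    have h1 := hVd i x
    have h2 := hVw x
    simp only at h1 h2 ⊢
    simp only [hw] at h2
    omega
  have hhV : ∀ i j, Vper u Λ (fun x => h i x - h j x) := by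
    intro i j
    rcases Fin.eq_castSucc_or_eq_last i with ⟨k, rfl⟩ | rfl <;>
      rcases Fin.eq_castSucc_or_eq_last j with ⟨k', rfl⟩ | rfl
    · rw [hcast, hcast]; exact hg'V k k'
    · rw [hcast, hlast]; exact hVe k
    · rw [hcast, hlast]
      intro x
      have := hVe k' x
      simp only at this ⊢
      omega
    · intro x; simp
  -- nonzeroness of differences
  have hwnz : ∀ i : Fin sM, ∃ x, g' i x ≠ e x := by
    intro i
    by_contra hcon
    push_neg at hcon
    rcases eq_or_ne i i0 with hi | hi
    · apply hx₀
      have h5 : g' i x₀ = e x₀ := hcon x₀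
      rw [hi, hanchor] at h5
      exact h5
    · rcases hg'TS i i0 hi 1 with ⟨x, hxne, hb1, hb2⟩
      apply hxne
      show g' i x - g' i0 x = 0
      rw [hanchor, hcon x]
      have h5 := hw_supp x (by omega)
      simp only [hw] at h5
      omega
  have hhNZ : ∀ i j : Fin (sM+1), i ≠ j → ∃ x, h i x ≠ h j x := by
    intro i j hij
    rcases Fin.eq_castSucc_or_eq_last i with ⟨k, rfl⟩ | rfl <;>
      rcases Fin.eq_castSucc_or_eq_last j with ⟨k', rfl⟩ | rfl
    · have hkne : k ≠ k' := fun hc => hij (by rw [hc])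
      rcases hg'TS k k' hkne 0 with ⟨x, hxne, _, _⟩
      refine ⟨x, ?_⟩
      rw [hcast, hcast]
      intro hc
      exact hxne (by simpa [sub_eq_zero] using hc)
    · rcases hwnz k with ⟨x, hx⟩
      refine ⟨x, ?_⟩
      rw [hcast, hlast]
      exact hx
    · rcases hwnz k' with ⟨x, hx⟩
      refine ⟨x, ?_⟩
      rw [hcast, hlast]
      exact fun hc => hx hc.symm
    · exact absurd rfl hij
  -- the upward push
  have hg1 : (1:ℤ) ≤ gg u := gg_pos hu
  have haug : ∀ i j : Fin (sM+1), i ≠ j → ∀ ℓ : ℤ,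
      {m : ℕ | ∃ x, (h i (x - (m:ℤ) • ww u) ≠ h j (x - (m:ℤ) • ww u)) ∧
        ℓ ≤ inner2 x u ∧ inner2 x u ≤ ℓ + Gs} ∈ U := by
    intro i j hij ℓ
    rcases hhNZ i j hij with ⟨x₀', hx₀'⟩
    apply Filter.mem_of_superset (Filter.mem_hyperfilter_of_finite_compl
      (s := {m : ℕ | ℓ + Gs - inner2 x₀' u ≤ (m:ℤ)}) ?_)
    · intro m hm
      simp only [Set.mem_setOf_eq] at hm
      have hmg : (m:ℤ) ≤ (m:ℤ) * gg u := le_mul_of_one_le_right (by positivity) hg1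
      have hcond : (ℓ - (m:ℤ) * gg u) + Gs ≤ inner2 x₀' u := by omega
      rcases descent hgap (hhY i) (hhY j) hx₀' (ℓ - (m:ℤ) * gg u) hcond with
        ⟨x₁, hx₁ne, hb1, hb2⟩
      refine ⟨x₁ + (m:ℤ) • ww u, ?_, ?_, ?_⟩
      · have harg : x₁ + (m:ℤ) • ww u - (m:ℤ) • ww u = x₁ := by abel
        rw [harg]
        exact hx₁ne
      · rw [inner2_add, inner2_smul, inner2_ww hu]
        omega
      · rw [inner2_add, inner2_smul, inner2_ww hu]
        omega
    · apply Set.Finite.subset (Finset.range ((ℓ + Gs - inner2 x₀' u).toNat + 1)).finite_toSet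
      intro m hm
      simp only [Set.mem_compl_iff, Set.mem_setOf_eq, not_le] at hm
      simp only [Finset.coe_range, Set.mem_Iio]
      omega
  obtain ⟨h', hh'Y, hh'V, hh'TS, _⟩ :=
    limit_fam (Gs := Gs) hu hΛ1 hYcl hYinv hYA h hhY hhV (fun m => (m:ℤ) • ww u) U haug
  have : TSFam Y u Λ Gs (sM+1) := ⟨h', hh'Y, hh'V, hh'TS⟩
  have := hsM_max (sM+1) this
  omega

end Main



section Assembly

theorem translate_mem_orbitClosure {c d : Cfg} {t : ℤ×ℤ} (hd : d ∈ orbitClosure c) :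
    Translate t d ∈ orbitClosure c := by
  rw [orbitClosure, mem_closure_iff_fin] at hd ⊢
  intro F
  rcases hd (F.image (fun x => x - t)) with ⟨s, ⟨t', rfl⟩, hs⟩
  refine ⟨Translate (t' + t) c, ⟨t' + t, rfl⟩, ?_⟩
  intro x hx
  have h1 := hs (x - t) (Finset.mem_image_of_mem _ hx)
  show d (x - t) = c (x - (t' + t))
  rw [h1]
  show c (x - t - t') = c (x - (t' + t))
  congr 1
  abel

theorem mem_orbitClosure_self (c : Cfg) : c ∈ orbitClosure c :=
  subset_closure ⟨0, (translate_zero c).symm⟩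

theorem orbitClosure_subset_of {S : Set Cfg} (hcl : IsClosed S)
    (hinv : ∀ (t : ℤ×ℤ), ∀ d ∈ S, Translate t d ∈ S) {y : Cfg} (hy : y ∈ S) :
    orbitClosure y ⊆ S := by
  apply closure_minimal _ hcl
  rintro s ⟨t, rfl⟩
  exact hinv t y hy

theorem val_orbitClosure {c : Cfg} {d : Cfg} (hd : d ∈ orbitClosure c) (x : ℤ×ℤ) :
    d x ∈ Set.range c := by
  rw [orbitClosure, mem_closure_iff_fin] at hd
  rcases hd {x} with ⟨s, ⟨t, rfl⟩, hs⟩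
  rw [hs x (Finset.mem_singleton_self x)]
  exact ⟨x - t, rfl⟩

theorem ann_orbitClosure {c : Cfg} {f : (ℤ×ℤ) →₀ ℤ} (hann : Annihilates f c) {d : Cfg}
    (hd : d ∈ orbitClosure c) : ∀ n : ℤ×ℤ, ∑ t ∈ f.support, f t * d (n - t) = 0 := by
  intro n
  rw [orbitClosure, mem_closure_iff_fin] at hd
  rcases hd (f.support.image (fun τ => n - τ)) with ⟨s, ⟨t', rfl⟩, hs⟩
  have hpt : ∀ τ ∈ f.support, d (n - τ) = c ((n - t') - τ) := by
    intro τ hτ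
    have h1 := hs (n - τ) (Finset.mem_image_of_mem _ hτ)
    rw [h1]
    show c (n - τ - t') = c (n - t' - τ)
    congr 1
    abel
  rw [Finset.sum_congr rfl (fun τ hτ => by rw [hpt τ hτ])]
  exact hann (n - t')

theorem orbitClosure_isCompact {c : Cfg} (hfin : (Set.range c).Finite) :
    IsCompact (orbitClosure c) := by
  have hpi : IsCompact (Set.pi Set.univ (fun _ : ℤ×ℤ => Set.range c)) :=
    isCompact_univ_pi (fun _ => hfin.isCompact)
  apply IsCompact.of_isClosed_subset hpi isClosed_closure
  intro d hd
  rw [Set.mem_univ_pi]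
  exact fun x => val_orbitClosure hd x

/-- existence of a minimal subshift inside the orbit closure -/
theorem exists_minimal_subshift {c : Cfg} (hfin : (Set.range c).Finite) :
    ∃ Z : Set Cfg, Z ⊆ orbitClosure c ∧ Z.Nonempty ∧ IsClosed Z ∧
      (∀ (t : ℤ×ℤ), ∀ d ∈ Z, Translate t d ∈ Z) ∧
      (∀ y ∈ Z, Z ⊆ orbitClosure y) ∧ (∀ y ∈ Z, orbitClosure y = Z) := by
  classical
  set S : Set (Set Cfg) := {Z | Z.Nonempty ∧ IsClosed Z ∧ Z ⊆ orbitClosure c ∧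
    ∀ (t : ℤ×ℤ), ∀ d ∈ Z, Translate t d ∈ Z} with hS
  have hZorn := zorn_superset_nonempty S ?_ (orbitClosure c) ?_
  · rcases hZorn with ⟨Z, hZsub, hZmin⟩
    rcases hZmin.prop with ⟨hZne, hZcl, hZsub', hZinv⟩
    have hkey : ∀ y ∈ Z, orbitClosure y = Z := by
      intro y hy
      have h1 : orbitClosure y ⊆ Z := orbitClosure_subset_of hZcl hZinv hy
      have h2 : orbitClosure y ∈ S := by
        refine ⟨⟨y, mem_orbitClosure_self y⟩, isClosed_closure, h1.trans hZsub', ?_⟩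
        intro t d hd
        exact translate_mem_orbitClosure hd
      exact h1.antisymm (hZmin.2 h2 h1)
    refine ⟨Z, hZsub', hZne, hZcl, hZinv, ?_, hkey⟩
    intro y hy
    rw [hkey y hy]
  · -- chain condition
    intro ch hch hchain hchne
    refine ⟨⋂₀ ch, ?_, fun s hs => Set.sInter_subset_of_mem hs⟩
    have hne : (⋂₀ ch).Nonempty := by
      have : Nonempty ch := hchne.to_subtype
      apply IsCompact.nonempty_sInter_of_directed_nonempty_isCompact_isClosed
      · exact IsChain.directedOn hchain.symm
      · exact fun U hU => (hch hU).1
      · intro U hU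
        exact IsCompact.of_isClosed_subset (orbitClosure_isCompact hfin)
          (hch hU).2.1 (hch hU).2.2.1
      · exact fun U hU => (hch hU).2.1
    refine ⟨hne, isClosed_sInter (fun U hU => (hch hU).2.1), ?_, ?_⟩
    · rcases hchne with ⟨U, hU⟩
      exact (Set.sInter_subset_of_mem hU).trans (hch hU).2.2.1
    · intro t d hd
      rw [Set.mem_sInter] at hd ⊢
      intro U hU
      exact (hch hU).2.2.2 t d (hd U hU)
  · -- orbitClosure c ∈ S
    refine ⟨⟨c, mem_orbitClosure_self c⟩, isClosed_closure, subset_rfl, ?_⟩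
    intro t d hd
    exact translate_mem_orbitClosure hd

/-- final assembly -/
theorem main_result
    (c : Cfg) (hfin : (Set.range c).Finite)
    (f : (ℤ × ℤ) →₀ ℤ) (hf : f ≠ 0) (hann : Annihilates f c) :
    ∃ c' ∈ orbitClosure c, ∀ u : ℤ × ℤ, u ≠ 0 →
      (DeterministicIn (orbitClosure c') u ↔ DeterministicIn (orbitClosure c') (-u)) := by
  classical
  obtain ⟨Z, hZsub, hZne, hZcl, hZinv, hZmin, hZorb⟩ := exists_minimal_subshift hfin
  rcases hZne with ⟨c', hc'⟩
  refine ⟨c', hZsub hc', ?_⟩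
  intro u hu
  have horb : orbitClosure c' = Z := hZorb c' hc'
  rw [horb]
  set A : Finset ℤ := hfin.toFinset with hA
  have hYA : ∀ d ∈ Z, ∀ x, d x ∈ A := by
    intro d hd x
    rw [hA, Set.Finite.mem_toFinset]
    exact val_orbitClosure (hZsub hd) x
  have hYann : ∀ d ∈ Z, ∀ n : ℤ×ℤ, ∑ t ∈ f.support, f t * d (n - t) = 0 :=
    fun d hd => ann_orbitClosure hann (hZsub hd)
  constructor
  · intro hdet
    exact det_symm hZcl hZinv hZmin hYA hf hYann hu hdet
  · intro hdet
    have hu' : -u ≠ 0 := neg_ne_zero.2 hu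
    have := det_symm hZcl hZinv hZmin hYA hf hYann hu' hdet
    rwa [neg_neg] at this

end Assembly

end NOS

/-- If a two-dimensional configuration over a finite alphabet of
integers has a non-trivial annihilator, then its orbit closure contains a
configuration `c'` such that the orbit closure of `c'` has no one-sided direction
of determinism. -/
theorem no_one_sided_determinism
    (c : ℤ × ℤ → ℤ) (hfin : (Set.range c).Finite)
    (f : (ℤ × ℤ) →₀ ℤ) (hf : f ≠ 0) (hann : Annihilates f c) :
    ∃ c' ∈ orbitClosure c, ∀ u : ℤ × ℤ, u ≠ 0 →
      (DeterministicIn (orbitClosure c') u ↔ DeterministicIn (orbitClosure c') (-u)) := by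
  exact NOS.main_result c hfin f hf hann
end

section
/- Let c : ℤ² → ℤ be a configuration taking only finitely many values. If c has low complexity with respect to some finite non-empty set D ⊂ ℤ², then there exists a non-trivial Laurent polynomial annihilating c. -/
/-- A configuration `c : ℤ² → ℤ` taking finitely many values
which has low complexity with respect to some finite non-empty shape `D` is
annihilated by some non-trivial Laurent polynomial. -/
theorem exists_annihilator_of_low_complexity
    (c : ℤ × ℤ → ℤ) (hfin : (Set.range c).Finite)
    (D : Set (ℤ × ℤ)) (hD : D.Finite) (hne : D.Nonempty)
    (hlc : (patterns c D).ncard ≤ D.ncard) :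
    ∃ f : (ℤ × ℤ) →₀ ℤ, f ≠ 0 ∧ Annihilates f c := by
  classical
  haveI : Finite ↥D := hD
  haveI : Fintype ↥D := hD.fintype
  -- patterns form a finite set
  have hPfin : (patterns c D).Finite := by
    apply Set.Finite.subset (Set.Finite.pi (fun _ : ↥D => hfin))
    rintro p ⟨t, ht⟩ x _
    rw [ht x]
    exact ⟨_, rfl⟩
  set V : (↥D → ℤ) → (Option ↥D → ℚ) :=
    fun p o => Option.elim o 1 (fun d => (p d : ℚ)) with hV
  set Svec := V '' patterns c D with hSvecdef
  have hSfin : Svec.Finite := hPfin.image V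
  haveI := hSfin.fintype
  have hw : ∀ t : ℤ × ℤ,
      (fun o : Option ↥D => Option.elim o 1 fun d => ((c ((d : ℤ × ℤ) - t) : ℤ) : ℚ)) ∈ Svec := by
    intro t
    exact ⟨fun x => c ((x : ℤ × ℤ) - t), ⟨t, fun x => rfl⟩, rfl⟩
  let M : (Option ↥D → ℚ) →ₗ[ℚ] (↥Svec → ℚ) :=
    LinearMap.pi fun s =>
      { toFun := fun a => ∑ i, a i * (s : Option ↥D → ℚ) i
        map_add' := by intro x y; simp [add_mul, Finset.sum_add_distrib]
        map_smul' := by intro r x; simp [Finset.mul_sum, mul_assoc, mul_add] }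
  have hlt : Module.finrank ℚ (↥Svec → ℚ) < Module.finrank ℚ (Option ↥D → ℚ) := by
    rw [Module.finrank_pi, Module.finrank_pi]
    have h1 : Fintype.card ↥Svec = Svec.ncard := by
      rw [Set.ncard_eq_toFinset_card', Set.toFinset_card]
    have h2 : Svec.ncard ≤ (patterns c D).ncard := Set.ncard_image_le hPfin
    have h3 : D.ncard = Fintype.card ↥D := by
      rw [Set.ncard_eq_toFinset_card', Set.toFinset_card]
    have h4 : Fintype.card (Option ↥D) = Fintype.card ↥D + 1 := by
      simp [Fintype.card_option]
    omega
  obtain ⟨a, haker, ha0⟩ :=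
    (Submodule.ne_bot_iff _).mp (LinearMap.ker_ne_bot_of_finrank_lt (f := M) hlt)
  have hrel : ∀ t : ℤ × ℤ,
      a none + ∑ d : ↥D, a (some d) * (c ((d : ℤ × ℤ) - t) : ℚ) = 0 := by
    intro t
    have h0 : M a = 0 := LinearMap.mem_ker.mp haker
    have h1 := congrFun h0 ⟨_, hw t⟩
    have h2 : (∑ i : Option ↥D,
        a i * (Option.elim i 1 fun d : ↥D => ((c ((d : ℤ × ℤ) - t) : ℤ) : ℚ))) = 0 := h1
    rw [Fintype.sum_option] at h2
    simpa using h2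
  -- clear denominators
  set N : ℕ := ∏ i : Option ↥D, (a i).den with hNdef
  have hN : (N : ℚ) ≠ 0 := by
    rw [hNdef]
    push_cast
    exact Finset.prod_ne_zero_iff.mpr fun i _ => by exact_mod_cast (a i).den_nz
  have hbex : ∀ i : Option ↥D, ∃ z : ℤ, (z : ℚ) = (N : ℚ) * a i := by
    intro i
    obtain ⟨m, hm⟩ := Finset.dvd_prod_of_mem (fun i => (a i).den) (Finset.mem_univ i)
    refine ⟨(a i).num * m, ?_⟩
    rw [← hNdef] at hm
    rw [hm]
    push_cast
    rw [mul_comm ((a i).den : ℚ) (m : ℚ), mul_assoc, mul_comm ((a i).den : ℚ) (a i),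
      Rat.mul_den_eq_num, mul_comm]
  choose b hb using hbex
  have hrelZ : ∀ t : ℤ × ℤ,
      b none + ∑ d : ↥D, b (some d) * c ((d : ℤ × ℤ) - t) = 0 := by
    intro t
    have key : ((b none + ∑ d : ↥D, b (some d) * c ((d : ℤ × ℤ) - t) : ℤ) : ℚ)
        = (N : ℚ) * (a none + ∑ d : ↥D, a (some d) * (c ((d : ℤ × ℤ) - t) : ℚ)) := by
      push_cast
      rw [mul_add, Finset.mul_sum]
      congr 1
      · exact hb none
      · refine Finset.sum_congr rfl fun d _ => ?_
        rw [← mul_assoc, ← hb (some d)]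
    have h0 : ((b none + ∑ d : ↥D, b (some d) * c ((d : ℤ × ℤ) - t) : ℤ) : ℚ) = 0 := by
      rw [key, hrel t, mul_zero]
    exact_mod_cast h0
  have hbne : ∃ d : ↥D, b (some d) ≠ 0 := by
    by_contra h
    push_neg at h
    have hnone : b none = 0 := by
      have := hrelZ 0
      simpa [h] using this
    apply ha0
    funext i
    have hbz : b i = 0 := by cases i with
      | none => exact hnone
      | some d => exact h d
    have := hb i
    rw [hbz] at this
    have : (N : ℚ) * a i = 0 := by exact_mod_cast this.symm
    have := (mul_eq_zero.mp this).resolve_left hN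
    simpa using this
  -- build the finsupp
  let e : ℤ × ℤ := (1, 0)
  let f : (ℤ × ℤ) →₀ ℤ := ∑ d : ↥D, Finsupp.single (-(d : ℤ × ℤ)) (b (some d))
  have hfapp : ∀ d₀ : ↥D, f (-(d₀ : ℤ × ℤ)) = b (some d₀) := by
    intro d₀
    rw [Finsupp.finset_sum_apply]
    rw [Finset.sum_eq_single d₀]
    · simp [Finsupp.single_apply]
    · intro d _ hd
      rw [Finsupp.single_apply, if_neg]
      intro hcontr
      exact hd (Subtype.coe_injective (neg_inj.mp hcontr))
    · simp
  have hfsum : ∀ n : ℤ × ℤ, (f.sum fun t z => z * c (n - t)) = - b none := by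
    intro n
    let φ : ((ℤ × ℤ) →₀ ℤ) →+ ℤ :=
      Finsupp.liftAddHom (fun t => AddMonoidHom.mulRight (c (n - t)))
    have hφ : ∀ g : (ℤ × ℤ) →₀ ℤ, φ g = g.sum fun t z => z * c (n - t) := fun g => rfl
    rw [← hφ f]
    rw [map_sum]
    have h1 : ∀ d : ↥D, φ (Finsupp.single (-(d : ℤ × ℤ)) (b (some d)))
        = b (some d) * c (n + d) := by
      intro d
      rw [Finsupp.liftAddHom_apply_single]
      simp [AddMonoidHom.mulRight, sub_neg_eq_add]
    rw [Finset.sum_congr rfl fun d _ => h1 d]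
    have h2 := hrelZ (-n)
    have h3 : ∀ d : ↥D, c ((d : ℤ × ℤ) - (-n)) = c (n + d) := by
      intro d
      rw [sub_neg_eq_add, add_comm]
    rw [Finset.sum_congr rfl fun d _ => by rw [h3 d]] at h2
    linarith
  have hf0 : f ≠ 0 := by
    obtain ⟨d₀, hd₀⟩ := hbne
    intro h
    apply hd₀
    rw [← hfapp d₀, h, Finsupp.coe_zero, Pi.zero_apply]
  obtain ⟨t₀, ht₀mem, ht₀max⟩ :=
    f.support.exists_max_image (fun t => t.1) (Finsupp.support_nonempty_iff.mpr hf0)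
  refine ⟨f - Finsupp.mapDomain (· + e) f, ?_, ?_⟩
  · intro h
    have hmd : Finsupp.mapDomain (· + e) f (t₀ + e) = f t₀ := by
      exact Finsupp.mapDomain_apply (add_left_injective e) f t₀
    have hz : (f - Finsupp.mapDomain (· + e) f) (t₀ + e) = 0 := by
      rw [h, Finsupp.coe_zero, Pi.zero_apply]
    rw [Finsupp.sub_apply, hmd] at hz
    have hfe : f (t₀ + e) = 0 := by
      by_contra hc
      have hmem : t₀ + e ∈ f.support := Finsupp.mem_support_iff.mpr hc
      have := ht₀max _ hmem
      simp only [Prod.fst_add] at this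
      have he1 : e.1 = 1 := rfl
      omega
    rw [hfe, zero_sub, neg_eq_zero] at hz
    exact Finsupp.mem_support_iff.mp ht₀mem hz
  · intro n
    show ∑ t ∈ (f - Finsupp.mapDomain (· + e) f).support,
      (f - Finsupp.mapDomain (· + e) f) t * c (n - t) = 0
    have hsum : (∑ t ∈ (f - Finsupp.mapDomain (· + e) f).support,
        (f - Finsupp.mapDomain (· + e) f) t * c (n - t))
        = (f - Finsupp.mapDomain (· + e) f).sum fun t z => z * c (n - t) := rfl
    rw [hsum, Finsupp.sum_sub_index (h := fun t z => z * c (n - t)) (fun t b1 b2 => sub_mul _ _ _),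
      Finsupp.sum_mapDomain_index (h := fun t z => z * c (n - t)) (fun t => zero_mul _) (fun t b1 b2 => add_mul _ _ _)]
    have h2 : (f.sum fun t z => z * c (n - (t + e))) = f.sum fun t z => z * c ((n - e) - t) := by
      apply Finsupp.sum_congr
      intro t _
      congr 2
      abel
    rw [h2, hfsum n, hfsum (n - e), sub_self]
end

section
/- Let c : ℤ² → ℤ be a configuration taking only finitely many values which is annihilated by the product (x^{v₁} − 1)⋯(x^{v_m} − 1), i.e., (τ^{v₁} − id) ∘ ⋯ ∘ (τ^{v_m} − id) applied to c is zero, where v₁, …, v_m ∈ ℤ² are nonzero. Let u ∈ ℤ² be nonzero with ⟨u, v_i⟩ ≠ 0 for every i ∈ {1,…,m}. Then the orbit closure of c is deterministic in direction u. -/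
/-- The difference operator `τ^v - id`, corresponding to multiplication by the
Laurent polynomial `x^v - 1`. -/
def diffOp (v : ℤ × ℤ) (d : ℤ × ℤ → ℤ) : ℤ × ℤ → ℤ := fun n => d (n - v) - d n

lemma inner2_comm (x u : ℤ × ℤ) : inner2 x u = inner2 u x := by
  simp [inner2]; ring

lemma inner2_sub (x v u : ℤ × ℤ) : inner2 (x - v) u = inner2 x u - inner2 v u := by
  simp [inner2]; ring

lemma inner2_smul (k : ℤ) (v u : ℤ × ℤ) : inner2 (k • v) u = k * inner2 v u := by
  simp [inner2, Prod.smul_fst, Prod.smul_snd, smul_eq_mul]; ring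

lemma diffOp_translate (v t : ℤ × ℤ) (h : ℤ × ℤ → ℤ) :
    diffOp v (Translate t h) = Translate t (diffOp v h) := by
  funext n; simp [diffOp, Translate, sub_right_comm]

lemma foldr_translate (vs : List (ℤ × ℤ)) (t : ℤ × ℤ) (h : ℤ × ℤ → ℤ) :
    vs.foldr diffOp (Translate t h) = Translate t (vs.foldr diffOp h) := by
  induction vs with
  | nil => rfl
  | cons v rest ih => simp only [List.foldr, ih, diffOp_translate]

lemma foldr_sub (vs : List (ℤ × ℤ)) (d e : ℤ × ℤ → ℤ) :
    vs.foldr diffOp (fun n => d n - e n) =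
      fun n => vs.foldr diffOp d n - vs.foldr diffOp e n := by
  induction vs with
  | nil => rfl
  | cons v rest ih =>
      funext n
      simp only [List.foldr, ih, diffOp]
      ring

/-- The finite set of coordinates that `(vs.foldr diffOp h) n` depends on. -/
def shifts : List (ℤ × ℤ) → (ℤ × ℤ) → Finset (ℤ × ℤ)
  | [], n => {n}
  | v :: rest, n => shifts rest (n - v) ∪ shifts rest n

lemma foldr_local (vs : List (ℤ × ℤ)) (h h' : ℤ × ℤ → ℤ) (n : ℤ × ℤ)
    (hh : ∀ x ∈ shifts vs n, h x = h' x) :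
    vs.foldr diffOp h n = vs.foldr diffOp h' n := by
  induction vs generalizing n with
  | nil => exact hh n (by simp [shifts])
  | cons v rest ih =>
      simp only [List.foldr, diffOp]
      rw [ih (n - v) (fun x hx => hh x (by simp only [shifts, Finset.mem_union]; exact Or.inl hx)),
          ih n (fun x hx => hh x (by simp only [shifts, Finset.mem_union]; exact Or.inr hx))]

/-- If `f` vanishes below level `B`, then `vs.foldr diffOp f` vanishes below
`B` minus the total displacement. -/
lemma foldr_vanish (u : ℤ × ℤ) (vs : List (ℤ × ℤ)) (f : ℤ × ℤ → ℤ) (B : ℤ)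
    (hB : ∀ x, inner2 x u < B → f x = 0) :
    ∀ x, inner2 x u < B - (vs.map (fun w => |inner2 w u|)).sum →
      vs.foldr diffOp f x = 0 := by
  induction vs with
  | nil => intro x hx; simp only [List.map_nil, List.sum_nil, sub_zero] at hx; exact hB x hx
  | cons v rest ih =>
      intro x hx
      simp only [List.map_cons, List.sum_cons] at hx
      have hS : (0:ℤ) ≤ |inner2 v u| := abs_nonneg _
      simp only [List.foldr, diffOp]
      have h1 : rest.foldr diffOp f (x - v) = 0 := by
        apply ih
        rw [inner2_sub]
        have := neg_abs_le (inner2 v u)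
        linarith
      have h2 : rest.foldr diffOp f x = 0 := by
        apply ih
        linarith
      rw [h1, h2, sub_zero]

/-- Key lemma: a configuration annihilated by the product of difference operators
which vanishes below some level is identically zero. -/
lemma vanish_of_foldr (u : ℤ × ℤ) :
    ∀ vs : List (ℤ × ℤ), (∀ v ∈ vs, inner2 v u ≠ 0) →
    ∀ f : ℤ × ℤ → ℤ, vs.foldr diffOp f = 0 →
    ∀ B : ℤ, (∀ x, inner2 x u < B → f x = 0) → f = 0 := by
  intro vs
  induction vs with
  | nil => intro _ f hf _ _; exact hf
  | cons v rest ih =>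
      intro huv f hf B hB
      set g := rest.foldr diffOp f with hg
      have hper : ∀ n, g (n - v) = g n := by
        intro n
        have := congrFun hf n
        simp only [List.foldr, diffOp, Pi.zero_apply] at this
        have : g (n - v) - g n = 0 := this
        linarith
      have hper' : ∀ n, g (n + v) = g n := by
        intro n
        have := hper (n + v)
        simpa using this.symm
      have hzk : ∀ k : ℤ, ∀ n, g (n - k • v) = g n := by
        intro k
        induction k using Int.induction_on with
        | zero => intro n; simp
        | succ k ihk =>
            intro n
            have : n - ((k : ℤ) + 1) • v = (n - (k : ℤ) • v) - v := by
              rw [add_smul, one_smul, sub_sub]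
            rw [this, hper, ihk]
        | pred k ihk =>
            intro n
            have : n - (-(k : ℤ) - 1) • v = (n - (-(k : ℤ)) • v) + v := by
              rw [sub_smul, one_smul]
              abel
            rw [this, hper', ihk]
      set C := (rest.map (fun w => |inner2 w u|)).sum with hC
      have hgv : ∀ x, inner2 x u < B - C → g x = 0 := foldr_vanish u rest f B hB
      have hg0 : g = 0 := by
        funext n
        set a := inner2 v u with ha
        have hane : a ≠ 0 := huv v List.mem_cons_self
        have ha2 : 1 ≤ a * a := by
          have : 0 < a * a := mul_self_pos.mpr hane
          omega
        set t := max 0 (inner2 n u - B + C + 1) with ht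
        have ht0 : 0 ≤ t := le_max_left _ _
        have ht1 : inner2 n u - B + C + 1 ≤ t := le_max_right _ _
        have key : inner2 (n - (a * t) • v) u < B - C := by
          rw [inner2_sub, inner2_smul]
          have h1 : t ≤ a * a * t := le_mul_of_one_le_left ht0 ha2
          nlinarith
        have := hgv _ key
        rw [hzk (a * t) n] at this
        exact this
      have hrest : rest.foldr diffOp f = 0 := hg0
      exact ih (fun w hw => huv w (List.mem_cons_of_mem _ hw)) f hrest B hB

/-- Every element of the orbit closure of `c` is annihilated by the same product. -/
lemma foldr_orbitClosure (c : ℤ × ℤ → ℤ) (vs : List (ℤ × ℤ))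
    (hann : vs.foldr diffOp c = 0) :
    ∀ d ∈ orbitClosure c, vs.foldr diffOp d = 0 := by
  intro d hd
  funext n
  have hopen : IsOpen {e : ℤ × ℤ → ℤ | ∀ x ∈ shifts vs n, e x = d x} := by
    have heq : {e : ℤ × ℤ → ℤ | ∀ x ∈ shifts vs n, e x = d x} =
        (↑(shifts vs n) : Set (ℤ × ℤ)).pi (fun x => {d x}) := by
      ext e
      simp [Set.mem_pi]
    rw [heq]
    exact isOpen_set_pi (Finset.finite_toSet _) (fun _ _ => isOpen_discrete _)
  have hmemd : d ∈ {e : ℤ × ℤ → ℤ | ∀ x ∈ shifts vs n, e x = d x} := fun x _ => rfl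
  obtain ⟨e', he'mem, he'orb⟩ :=
    (mem_closure_iff.mp hd) _ hopen hmemd
  obtain ⟨t, rfl⟩ := he'orb
  have h1 : vs.foldr diffOp d n = vs.foldr diffOp (Translate t c) n :=
    (foldr_local vs _ _ n he'mem).symm
  rw [h1, foldr_translate]
  simp [Translate, hann]

/-- If `c : ℤ² → ℤ` takes finitely many values and is annihilated
by `(τ^{v₁} − id) ∘ ⋯ ∘ (τ^{v_m} − id)` with all `vᵢ` nonzero, and `u ≠ 0` is not
perpendicular to any `vᵢ`, then the orbit closure of `c` is deterministic in
direction `u`. -/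
theorem deterministic_of_not_perpendicular
    (c : ℤ × ℤ → ℤ) (hfin : (Set.range c).Finite)
    (vs : List (ℤ × ℤ)) (hne : vs ≠ []) (hnz : ∀ v ∈ vs, v ≠ 0)
    (hann : vs.foldr diffOp c = 0)
    (u : ℤ × ℤ) (hu : u ≠ 0) (huv : ∀ v ∈ vs, inner2 u v ≠ 0) :
    DeterministicIn (orbitClosure c) u := by
  intro d hd e he hde
  have hdann := foldr_orbitClosure c vs hann d hd
  have heann := foldr_orbitClosure c vs hann e he
  have hf : vs.foldr diffOp (fun n => d n - e n) = 0 := by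
    rw [foldr_sub]
    funext n
    simp [hdann, heann]
  have huv' : ∀ v ∈ vs, inner2 v u ≠ 0 := by
    intro v hv
    rw [inner2_comm]
    exact huv v hv
  have hB : ∀ x, inner2 x u < 0 → (fun n => d n - e n) x = 0 := by
    intro x hx
    have := hde hx
    simp [this]
  have h0 := vanish_of_foldr u vs huv' _ hf 0 hB
  funext n
  have := congrFun h0 n
  simp only [Pi.zero_apply] at this
  linarith
end

section
/- Let X be a subshift over a finite alphabet A ⊆ ℤ, let v ∈ ℤ² be nonzero, and let u ∈ ℤ² be nonzero with ⟨u, v⟩ = 0. Let k > |⟨u^⊥, v⟩| be such that the box B = B_u^k determines cell 0 in X, i.e., for all d, e ∈ X, d|_B = e|_B implies d(0) = e(0). If c₁, …, c_n ∈ X are pairwise distinct and τ^v(c₁) − c₁ = ⋯ = τ^v(c_n) − c_n, then n ≤ |A|^{|B|}. -/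
/-- Perpendicular vector: `(n,m)^⊥ = (m,−n)`. -/
def perp (u : ℤ × ℤ) : ℤ × ℤ := (u.2, -u.1)

/-- The discrete box `B_u^k`. -/
def Box (u : ℤ × ℤ) (k : ℤ) : Set (ℤ × ℤ) :=
  { x | -k < inner2 x u ∧ inner2 x u < 0 ∧ -k < inner2 x (perp u) ∧ inner2 x (perp u) < k }

/-- A subshift: a set of configurations closed in the product topology and closed
under translations. -/
def IsSubshift {A : Type*} [TopologicalSpace A] (X : Set (ℤ × ℤ → A)) : Prop :=
  IsClosed X ∧ ∀ c ∈ X, ∀ t : ℤ × ℤ, Translate t c ∈ X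

lemma inner2_add (a b w : ℤ × ℤ) : inner2 (a + b) w = inner2 a w + inner2 b w := by
  simp only [inner2, Prod.fst_add, Prod.snd_add]; ring

lemma inner2_sub_s9 (a b w : ℤ × ℤ) : inner2 (a - b) w = inner2 a w - inner2 b w := by
  simp only [inner2, Prod.fst_sub, Prod.snd_sub]; ring

lemma inner2_smul_s9 (j : ℤ) (v w : ℤ × ℤ) : inner2 (j * v.1, j * v.2) w = j * inner2 v w := by
  simp only [inner2]; ring

lemma inner2_comm_s9 (a b : ℤ × ℤ) : inner2 a b = inner2 b a := by
  simp only [inner2]; ring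

lemma vanish_above (X : Set (ℤ × ℤ → ℤ)) (hX : IsSubshift X)
    (v u : ℤ × ℤ) (huv : inner2 u v = 0) (k : ℤ)
    (hstep : inner2 (perp u) v ≠ 0) (hk : |inner2 (perp u) v| < k)
    (hdet : ∀ d ∈ X, ∀ e ∈ X, Set.EqOn d e (Box u k) → d 0 = e 0)
    (d e : ℤ × ℤ → ℤ) (hd : d ∈ X) (he : e ∈ X)
    (hper : ∀ x, d (x - v) - d x = e (x - v) - e x)
    (t : ℤ × ℤ) (h0 : ∀ x ∈ Box u k, d (x + t) = e (x + t)) :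
    ∀ x : ℤ × ℤ, inner2 t u ≤ inner2 x u → d x = e x := by
  have hk0 : 0 < k := lt_of_le_of_lt (abs_nonneg _) hk
  -- periodicity of the difference
  have h1 : ∀ x, d (x + v) - e (x + v) = d x - e x := by
    intro x
    have := hper (x + v)
    simp only [add_sub_cancel_right] at this
    linarith
  have h2 : ∀ x, d (x - v) - e (x - v) = d x - e x := by
    intro x; have := hper x; linarith
  have hP : ∀ (j : ℤ) (x : ℤ × ℤ),
      d (x + (j * v.1, j * v.2)) - e (x + (j * v.1, j * v.2)) = d x - e x := by
    intro j
    induction j using Int.induction_on with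
    | zero => intro x; simp [← Prod.zero_eq_mk]
    | succ n ih =>
        intro x
        have hx : x + (((n : ℤ) + 1) * v.1, ((n : ℤ) + 1) * v.2)
            = (x + v) + ((n : ℤ) * v.1, (n : ℤ) * v.2) := by
          apply Prod.ext <;> simp <;> ring
        rw [hx, ih (x + v)]
        exact h1 x
    | pred n ih =>
        intro x
        have hx : x + ((-(n : ℤ) - 1) * v.1, (-(n : ℤ) - 1) * v.2)
            = (x - v) + ((-(n : ℤ)) * v.1, (-(n : ℤ)) * v.2) := by
          apply Prod.ext <;> simp <;> ring
        rw [hx, ih (x - v)]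
        exact h2 x
  -- the stripe
  have stripe : ∀ y : ℤ × ℤ, -k < inner2 y u - inner2 t u →
      inner2 y u - inner2 t u < 0 → d y = e y := by
    intro y hy1 hy2
    set s : ℤ := inner2 (perp u) v with hs
    set p : ℤ := inner2 y (perp u) - inner2 t (perp u) with hpdef
    set j : ℤ := -(p / s) with hjdef
    have hmod : p + j * s = p % s := by
      rw [hjdef, Int.emod_def]; ring
    have hq1 : 0 ≤ p + j * s := by rw [hmod]; exact Int.emod_nonneg p hstep
    have hq2 : p + j * s < k := by
      rw [hmod]; exact lt_of_lt_of_le (Int.emod_lt p hstep) (le_of_lt (by rw [Int.natCast_natAbs]; exact hk))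
    set y' : ℤ × ℤ := y + (j * v.1, j * v.2) with hy'
    have hvu : inner2 v u = 0 := by rw [inner2_comm_s9]; exact huv
    have hvperp : inner2 v (perp u) = s := by rw [inner2_comm_s9]
    have hBox : (y' - t) ∈ Box u k := by
      have e1 : inner2 (y' - t) u = inner2 y u - inner2 t u := by
        rw [inner2_sub_s9, hy', inner2_add, inner2_smul_s9, hvu]; ring
      have e2 : inner2 (y' - t) (perp u) = p + j * s := by
        rw [inner2_sub_s9, hy', inner2_add, inner2_smul_s9, hvperp, hpdef]; ring
      exact ⟨by rw [e1]; linarith, by rw [e1]; linarith,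
        by rw [e2]; linarith, by rw [e2]; linarith⟩
    have hEq : d y' = e y' := by
      have := h0 _ hBox
      simpa [sub_add_cancel] using this
    have := hP j y
    rw [← hy'] at this
    have : d y - e y = 0 := by rw [← this, hEq]; ring
    linarith
  -- upward propagation
  have up : ∀ m : ℕ, ∀ x : ℤ × ℤ, inner2 x u - inner2 t u < (m : ℤ) →
      -k < inner2 x u - inner2 t u → d x = e x := by
    intro m
    induction m with
    | zero => intro x hx1 hx2; exact stripe x hx2 (by exact_mod_cast hx1)
    | succ n ih =>
        intro x hx1 hx2
        rcases lt_or_ge (inner2 x u - inner2 t u) (n : ℤ) with h' | h'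
        · exact ih x h' hx2
        · have hEqOn : Set.EqOn (Translate (-x) d) (Translate (-x) e) (Box u k) := by
            intro z hz
            obtain ⟨hz1, hz2, _, _⟩ := hz
            show d (z - -x) = e (z - -x)
            rw [sub_neg_eq_add]
            apply ih (z + x)
            · rw [inner2_add]
              push_cast at hx1
              linarith
            · rw [inner2_add]
              linarith
          have := hdet _ (hX.2 d hd (-x)) _ (hX.2 e he (-x)) hEqOn
          simpa [Translate, zero_sub, neg_neg] using this
  intro x hx
  have hr : (0 : ℤ) ≤ inner2 x u - inner2 t u := by linarith
  apply up (inner2 x u - inner2 t u + 1).toNat x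
  · rw [Int.toNat_of_nonneg (by linarith)]; linarith
  · linarith

/-- In the setting of the determinism box: pairwise distinct
configurations `c₁, …, c_N ∈ X` whose images under `τ^v − id` all coincide number
at most `|A|^{|B|}`. -/
theorem card_le_of_equal_diff
    (A : Finset ℤ) (X : Set (ℤ × ℤ → ℤ)) (hX : IsSubshift X)
    (hA : ∀ c ∈ X, ∀ n : ℤ × ℤ, c n ∈ A)
    (v : ℤ × ℤ) (hv : v ≠ 0) (u : ℤ × ℤ) (hu : u ≠ 0) (huv : inner2 u v = 0)
    (k : ℤ) (hk : |inner2 (perp u) v| < k)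
    (hdet : ∀ d ∈ X, ∀ e ∈ X, Set.EqOn d e (Box u k) → d 0 = e 0)
    (N : ℕ) (cs : Fin N → (ℤ × ℤ → ℤ)) (hcs : ∀ i, cs i ∈ X)
    (hinj : Function.Injective cs)
    (hdiff : ∀ i j, diffOp v (cs i) = diffOp v (cs j)) :
    N ≤ A.card ^ (Box u k).ncard := by
  classical
  -- positivity of |u|²
  have hu2 : 0 < inner2 u u := by
    have h1 : u.1 ≠ 0 ∨ u.2 ≠ 0 := by
      by_contra h
      push_neg at h
      exact hu (Prod.ext h.1 h.2)
    have n1 : 0 ≤ u.1 * u.1 := mul_self_nonneg _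
    have n2 : 0 ≤ u.2 * u.2 := mul_self_nonneg _
    rcases h1 with h | h
    · have := mul_self_pos.mpr h
      simp only [inner2]; linarith
    · have := mul_self_pos.mpr h
      simp only [inner2]; linarith
  -- the step is nonzero
  have hstep : inner2 (perp u) v ≠ 0 := by
    intro h
    apply hv
    have h1 : v.1 * inner2 u u = 0 := by
      simp only [inner2, perp] at h huv ⊢
      linear_combination u.1 * huv + u.2 * h
    have h2 : v.2 * inner2 u u = 0 := by
      simp only [inner2, perp] at h huv ⊢
      linear_combination u.2 * huv - u.1 * h
    have hv1 : v.1 = 0 := by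
      rcases mul_eq_zero.mp h1 with h' | h'
      · exact h'
      · exact absurd h' (ne_of_gt hu2)
    have hv2 : v.2 = 0 := by
      rcases mul_eq_zero.mp h2 with h' | h'
      · exact h'
      · exact absurd h' (ne_of_gt hu2)
    exact Prod.ext hv1 hv2
  -- the box is finite
  have hBoxFin : (Box u k).Finite := by
    have hinj2 : Function.Injective (fun x : ℤ × ℤ => (inner2 x u, inner2 x (perp u))) := by
      intro x y hxy
      have hfst : inner2 x u = inner2 y u := congrArg Prod.fst hxy
      have hsnd : inner2 x (perp u) = inner2 y (perp u) := congrArg Prod.snd hxy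
      simp only [inner2, perp] at hfst hsnd
      have e1 : x.1 * inner2 u u = y.1 * inner2 u u := by
        simp only [inner2]
        linear_combination u.1 * hfst + u.2 * hsnd
      have e2 : x.2 * inner2 u u = y.2 * inner2 u u := by
        simp only [inner2]
        linear_combination u.2 * hfst - u.1 * hsnd
      exact Prod.ext (mul_right_cancel₀ (ne_of_gt hu2) e1)
        (mul_right_cancel₀ (ne_of_gt hu2) e2)
    have hsub : Box u k ⊆ (fun x : ℤ × ℤ => (inner2 x u, inner2 x (perp u))) ⁻¹'
        ((Set.Ioo (-k) 0) ×ˢ (Set.Ioo (-k) k)) := by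
      intro x hx
      obtain ⟨ha, hb, hc, hd⟩ := hx
      exact ⟨⟨ha, hb⟩, ⟨hc, hd⟩⟩
    exact Set.Finite.subset
      (Set.Finite.preimage hinj2.injOn ((Set.finite_Ioo _ _).prod (Set.finite_Ioo _ _))) hsub
  haveI : Fintype ↥(Box u k) := hBoxFin.fintype
  -- choose difference witnesses for each pair
  have hD : ∀ p : Fin N × Fin N, ∃ x : ℤ × ℤ, cs p.1 ≠ cs p.2 → cs p.1 x ≠ cs p.2 x := by
    intro p
    by_cases h : cs p.1 = cs p.2
    · exact ⟨0, fun hn => absurd h hn⟩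
    · obtain ⟨x, hx⟩ := Function.ne_iff.mp h
      exact ⟨x, fun _ => hx⟩
  choose D hDspec using hD
  set M : ℕ := Finset.univ.sup (fun p : Fin N × Fin N => (inner2 (D p) u).natAbs) with hM
  set t : ℤ × ℤ := ((-(M : ℤ)) * u.1, (-(M : ℤ)) * u.2) with ht
  have htle : ∀ p : Fin N × Fin N, inner2 t u ≤ inner2 (D p) u := by
    intro p
    have h1 : (inner2 (D p) u).natAbs ≤ M :=
      Finset.le_sup (f := fun p : Fin N × Fin N => (inner2 (D p) u).natAbs) (Finset.mem_univ p)
    have h2 : -(M : ℤ) ≤ inner2 (D p) u := by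
      have habs : |inner2 (D p) u| ≤ (M : ℤ) := by
        rw [Int.abs_eq_natAbs]
        exact_mod_cast h1
      exact (abs_le.mp habs).1
    have h3 : inner2 t u = (-(M : ℤ)) * inner2 u u := by
      simp only [ht, inner2]; ring
    have h4 : (-(M : ℤ)) * inner2 u u ≤ (-(M : ℤ)) * 1 :=
      mul_le_mul_of_nonpos_left (by linarith) (by simp)
    rw [h3]
    calc (-(M : ℤ)) * inner2 u u ≤ (-(M : ℤ)) * 1 := h4
      _ = -(M : ℤ) := mul_one _
      _ ≤ inner2 (D p) u := h2
  -- the injection into box patterns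
  set Φ : Fin N → (↥(Box u k) → ↥A) :=
    fun i x => ⟨cs i (↑x + t), hA _ (hcs i) _⟩ with hΦdef
  have hΦ : Function.Injective Φ := by
    intro i j hij
    apply hinj
    by_contra hne
    have hx0 : cs i (D (i, j)) ≠ cs j (D (i, j)) := hDspec (i, j) hne
    have h0 : ∀ x ∈ Box u k, cs i (x + t) = cs j (x + t) := by
      intro x hx
      have := congrFun hij (⟨x, hx⟩ : ↥(Box u k))
      exact Subtype.ext_iff.mp this
    have hper : ∀ x, cs i (x - v) - cs i x = cs j (x - v) - cs j x := by
      intro x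
      have := congrFun (hdiff i j) x
      simpa [diffOp] using this
    exact hx0 (vanish_above X hX v u huv k hstep hk hdet _ _ (hcs i) (hcs j) hper t h0 _
      (htle (i, j)))
  calc N = Fintype.card (Fin N) := (Fintype.card_fin N).symm
    _ ≤ Fintype.card (↥(Box u k) → ↥A) := Fintype.card_le_of_injective Φ hΦ
    _ = Fintype.card ↥A ^ Fintype.card ↥(Box u k) := Fintype.card_fun
    _ = A.card ^ (Box u k).ncard := by
        rw [Fintype.card_coe, Set.ncard_eq_toFinset_card', Set.toFinset_card]
end
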